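/- arXiv:math/0109043 — 8 statements merged into one kernel-verified Lean document; each statement's English description precedes it below -/
import Mathlib

section
/- Let m, n ≥ 2 be integers. The dimension over 𝔽₂ = ZMod 2 of the space of harmonic functions on the m×n rectangular grid equals gcd(m+1, n+1) − 1. -/
/-- Membership in the m×n rectangular grid {0,…,m−1}×{0,…,n−1}. -/
def InGrid (m n i j : ℤ) : Prop :=
  0 ≤ i ∧ i ≤ m - 1 ∧ 0 ≤ j ∧ j ≤ n - 1


instance (m n i j : ℤ) : Decidable (InGrid m n i j) :=
  inferInstanceAs (Decidable (_ ∧ _ ∧ _ ∧ _))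

/-- A function on ℤ×ℤ with values in ZMod 2, vanishing outside the m×n grid,
is harmonic if the sum of its values at the four neighbours of any grid point is 0. -/
def IsHarmonic (m n : ℤ) (v : ℤ → ℤ → ZMod 2) : Prop :=
  (∀ i j : ℤ, ¬ InGrid m n i j → v i j = 0) ∧
  (∀ i j : ℤ, InGrid m n i j →
    v (i - 1) j + v (i + 1) j + v i (j - 1) + v i (j + 1) = 0)

/-- The 𝔽₂-vector space of harmonic functions on the m×n grid. -/
def harm (m n : ℤ) : Submodule (ZMod 2) (ℤ → ℤ → ZMod 2) where
  carrier := {v | IsHarmonic m n v}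
  zero_mem' := ⟨fun _ _ _ => rfl, fun _ _ _ => by simp⟩
  add_mem' := by
    rintro a b ⟨ha0, ha1⟩ ⟨hb0, hb1⟩
    refine ⟨fun i j h => ?_, fun i j h => ?_⟩
    · simp [Pi.add_apply, ha0 i j h, hb0 i j h]
    · have h1 := ha1 i j h
      have h2 := hb1 i j h
      simp only [Pi.add_apply]
      linear_combination h1 + h2
  smul_mem' := by
    rintro c a ⟨ha0, ha1⟩
    refine ⟨fun i j h => ?_, fun i j h => ?_⟩
    · simp [Pi.smul_apply, ha0 i j h]
    · have h1 := ha1 i j h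
      simp only [Pi.smul_apply, smul_eq_mul]
      linear_combination c * h1

/-- Functions vanishing on a prescribed set of points. -/
def vanishOn (P : ℤ → ℤ → Prop) : Submodule (ZMod 2) (ℤ → ℤ → ZMod 2) where
  carrier := {v | ∀ i j : ℤ, P i j → v i j = 0}
  zero_mem' := fun _ _ _ => rfl
  add_mem' := by
    intro a b ha hb i j h
    simp [Pi.add_apply, ha i j h, hb i j h]
  smul_mem' := by
    intro c a ha i j h
    simp [Pi.smul_apply, ha i j h]

/-- The polarized kernel ker BW: harmonic functions vanishing at white points
(points with i+j odd). -/
def kerBW (m n : ℤ) : Submodule (ZMod 2) (ℤ → ℤ → ZMod 2) :=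
  harm m n ⊓ vanishOn (fun i j => Odd (i + j))

/-- The polarized kernel ker WB: harmonic functions vanishing at black points
(points with i+j even). -/
def kerWB (m n : ℤ) : Submodule (ZMod 2) (ℤ → ℤ → ZMod 2) :=
  harm m n ⊓ vanishOn (fun i j => Even (i + j))

namespace HarmonicDim

/-! ### Folding integers into a fundamental domain -/

/-- Fold `x` into the fundamental domain `[-1, c-1]` of the group generated by
reflection about `-1` and translation by `2c`. -/
def fold (c x : ℤ) : ℤ :=
  if (x + 1) % (2 * c) ≤ c then (x + 1) % (2 * c) - 1 else 2 * c - 1 - (x + 1) % (2 * c)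

lemma emod_eq_of_dvd_of_range {n a r : ℤ} (hd : n ∣ (a - r)) (h0 : 0 ≤ r) (h1 : r < n) :
    a % n = r := by
  rw [Int.emod_eq_emod_iff_emod_sub_eq_zero.mpr (Int.emod_eq_zero_of_dvd hd)]
  exact Int.emod_eq_of_lt h0 h1

lemma exists_q (c x : ℤ) : ∃ q, x + 1 = 2 * (c * q) + (x + 1) % (2 * c) := by
  refine ⟨(x + 1) / (2 * c), ?_⟩
  have h := Int.mul_ediv_add_emod (x + 1) (2 * c)
  have h2 : 2 * c * ((x + 1) / (2 * c)) = 2 * (c * ((x + 1) / (2 * c))) := by ring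
  omega

lemma fold_of_emod {c y t' : ℤ} (h : (y + 1) % (2 * c) = t') :
    fold c y = if t' ≤ c then t' - 1 else 2 * c - 1 - t' := by
  simp only [fold, h]

lemma fold_eq_self {c x : ℤ} (hc : 0 < c) (h1 : -1 ≤ x) (h2 : x ≤ c - 1) : fold c x = x := by
  have h : (x + 1) % (2 * c) = x + 1 := Int.emod_eq_of_lt (by omega) (by omega)
  rw [fold_of_emod h, if_pos (by omega)]
  omega

lemma fold_bounds {c : ℤ} (hc : 0 < c) (x : ℤ) : -1 ≤ fold c x ∧ fold c x ≤ c - 1 := by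
  have h0 : 0 ≤ (x + 1) % (2 * c) := Int.emod_nonneg _ (by omega)
  have h1 : (x + 1) % (2 * c) < 2 * c := Int.emod_lt_of_pos _ (by omega)
  simp only [fold]; split <;> omega

lemma fold_period {c : ℤ} (x : ℤ) : fold c (x + 2 * c) = fold c x := by
  simp only [fold]
  rw [show x + 2 * c + 1 = (x + 1) + (2 * c) * 1 by ring, Int.add_mul_emod_self_left]

lemma fold_parity {c x : ℤ} (hc : 0 < c) : fold c x % 2 = x % 2 := by
  have hne : 2 * c ≠ 0 := by omega
  have h0 : 0 ≤ (x + 1) % (2 * c) := Int.emod_nonneg _ hne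
  obtain ⟨q, hq⟩ := exists_q c x
  simp only [fold]; split <;> omega

lemma fold_reflect {c : ℤ} (hc : 0 < c) (x : ℤ) : fold c (-2 - x) = fold c x := by
  have hne : 2 * c ≠ 0 := by omega
  set t := (x + 1) % (2 * c) with htd
  have h0 : 0 ≤ t := Int.emod_nonneg _ hne
  have h1 : t < 2 * c := Int.emod_lt_of_pos _ (by omega)
  obtain ⟨q, hq⟩ := exists_q c x
  have hx : fold c x = if t ≤ c then t - 1 else 2 * c - 1 - t := fold_of_emod htd.symm
  by_cases ht : t = 0
  · have k2 : (-2 - x + 1) % (2 * c) = 0 := by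
      apply emod_eq_of_dvd_of_range (n := 2 * c) ⟨-q, ?_⟩ le_rfl (by omega)
      have hr : 2 * c * (-q) = -(2 * (c * q)) := by ring
      omega
    rw [hx, fold_of_emod k2]
    split_ifs <;> omega
  · have k2 : (-2 - x + 1) % (2 * c) = 2 * c - t := by
      apply emod_eq_of_dvd_of_range (n := 2 * c) ⟨-q - 1, ?_⟩ (by omega) (by omega)
      have hr : 2 * c * (-q - 1) = -(2 * (c * q)) - 2 * c := by ring
      omega
    rw [hx, fold_of_emod k2]
    split_ifs <;> omega

lemma fold_nbrs {c : ℤ} (hc : 2 ≤ c) (x : ℤ) :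
    (0 ≤ fold c x ∧ fold c x ≤ c - 2 ∧ fold c (x - 1) = fold c x - 1 ∧
      fold c (x + 1) = fold c x + 1) ∨
    (0 ≤ fold c x ∧ fold c x ≤ c - 2 ∧ fold c (x - 1) = fold c x + 1 ∧
      fold c (x + 1) = fold c x - 1) ∨
    (fold c x = -1 ∧ fold c (x - 1) = 0 ∧ fold c (x + 1) = 0) ∨
    (fold c x = c - 1 ∧ fold c (x - 1) = c - 2 ∧ fold c (x + 1) = c - 2) := by
  have hne : 2 * c ≠ 0 := by omega
  set t := (x + 1) % (2 * c) with htd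
  have h0 : 0 ≤ t := Int.emod_nonneg _ hne
  have h1 : t < 2 * c := Int.emod_lt_of_pos _ (by omega)
  obtain ⟨q, hq⟩ := exists_q c x
  have hx : fold c x = if t ≤ c then t - 1 else 2 * c - 1 - t := fold_of_emod htd.symm
  have hmem : (x - 1 + 1) % (2 * c) = if t = 0 then 2 * c - 1 else t - 1 := by
    split_ifs with h
    · apply emod_eq_of_dvd_of_range (n := 2 * c) ⟨q - 1, ?_⟩ (by omega) (by omega)
      have hr : 2 * c * (q - 1) = 2 * (c * q) - 2 * c := by ring
      omega
    · apply emod_eq_of_dvd_of_range (n := 2 * c) ⟨q, ?_⟩ (by omega) (by omega)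
      have hr : 2 * c * q = 2 * (c * q) := by ring
      omega
  have hpem : (x + 1 + 1) % (2 * c) = if t = 2 * c - 1 then 0 else t + 1 := by
    split_ifs with h
    · apply emod_eq_of_dvd_of_range (n := 2 * c) ⟨q + 1, ?_⟩ le_rfl (by omega)
      have hr : 2 * c * (q + 1) = 2 * (c * q) + 2 * c := by ring
      omega
    · apply emod_eq_of_dvd_of_range (n := 2 * c) ⟨q, ?_⟩ (by omega) (by omega)
      have hr : 2 * c * q = 2 * (c * q) := by ring
      omega
  have hm := fold_of_emod hmem
  have hp := fold_of_emod hpem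
  rw [hx, hm, hp]
  split_ifs <;> omega

/-! ### The diagonal parametrization -/

def psi (f : ℤ → ZMod 2) (i j : ℤ) : ZMod 2 := f (i + j) + f (j - i - 2)

lemma add_self_zmod2 : ∀ a : ZMod 2, a + a = 0 := by decide

lemma psi_harm (f : ℤ → ZMod 2) (x y : ℤ) :
    psi f (x - 1) y + psi f (x + 1) y + psi f x (y - 1) + psi f x (y + 1) = 0 := by
  simp only [psi]
  rw [show x - 1 + y = x + y - 1 by ring, show y - (x - 1) - 2 = y - x - 1 by ring,
      show x + 1 + y = x + y + 1 by ring, show y - (x + 1) - 2 = y - x - 3 by ring,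
      show x + (y - 1) = x + y - 1 by ring, show y - 1 - x - 2 = y - x - 3 by ring,
      show x + (y + 1) = x + y + 1 by ring, show y + 1 - x - 2 = y - x - 1 by ring]
  have h : ∀ a b c d : ZMod 2, a + b + (c + d) + (a + d) + (c + b) = 0 := by decide
  exact h _ _ _ _

/-- Two everywhere-harmonic functions agreeing on the rows `x = 0` and `x = 1` agree. -/
lemma harm2_unique (W1 W2 : ℤ → ℤ → ZMod 2)
    (h1 : ∀ x y, W1 (x - 1) y + W1 (x + 1) y + W1 x (y - 1) + W1 x (y + 1) = 0)
    (h2 : ∀ x y, W2 (x - 1) y + W2 (x + 1) y + W2 x (y - 1) + W2 x (y + 1) = 0)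
    (e0 : ∀ y, W1 0 y = W2 0 y) (e1 : ∀ y, W1 1 y = W2 1 y) :
    ∀ x y, W1 x y = W2 x y := by
  have solve : ∀ a b c d a' b' c' d' : ZMod 2, a + b + c + d = 0 → a' + b' + c' + d' = 0 →
      a = a' → c = c' → d = d' → b = b' := by decide
  have solve2 : ∀ a b c d a' b' c' d' : ZMod 2, a + b + c + d = 0 → a' + b' + c' + d' = 0 →
      b = b' → c = c' → d = d' → a = a' := by decide
  have step_up : ∀ x : ℤ, (∀ y, W1 x y = W2 x y) → (∀ y, W1 (x + 1) y = W2 (x + 1) y) →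
      ∀ y, W1 (x + 2) y = W2 (x + 2) y := by
    intro x ha hb y
    have k1 := h1 (x + 1) y
    have k2 := h2 (x + 1) y
    rw [show x + 1 - 1 = x by ring, show x + 1 + 1 = x + 2 by ring] at k1 k2
    exact solve _ _ _ _ _ _ _ _ k1 k2 (ha y) (hb (y - 1)) (hb (y + 1))
  have step_down : ∀ x : ℤ, (∀ y, W1 x y = W2 x y) → (∀ y, W1 (x + 1) y = W2 (x + 1) y) →
      ∀ y, W1 (x - 1) y = W2 (x - 1) y := by
    intro x ha hb y
    exact solve2 _ _ _ _ _ _ _ _ (h1 x y) (h2 x y) (hb y) (ha (y - 1)) (ha (y + 1))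
  have main : ∀ x : ℤ, (∀ y, W1 x y = W2 x y) ∧ (∀ y, W1 (x + 1) y = W2 (x + 1) y) := by
    intro x
    induction x using Int.induction_on with
    | zero => exact ⟨e0, by simpa using e1⟩
    | succ k ih =>
      refine ⟨ih.2, ?_⟩
      have hstep := step_up k ih.1 ih.2
      intro y
      rw [show ((k : ℤ) + 1 + 1) = (k : ℤ) + 2 by ring]
      exact hstep y
    | pred k ih =>
      refine ⟨?_, by simpa using ih.1⟩
      have hstep := step_down (-(k : ℤ)) ih.1 ih.2
      intro y
      exact hstep y
  exact fun x y => (main x).1 y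

/-! ### Building the generating function from a harmonic function -/

/-- Partial sums used to build `f` from `w` by the recurrence `f s = f (s-2) + w s`. -/
def fA (w : ℤ → ZMod 2) : ℕ → ZMod 2
  | 0 => 0
  | 1 => 0
  | (k + 2) => fA w k + w k

lemma fA_step (w : ℤ → ZMod 2) (k : ℕ) : fA w (k + 2) = fA w k + w k := rfl

def buildf (w : ℤ → ZMod 2) (s : ℤ) : ZMod 2 :=
  if -2 ≤ s then fA w (s + 2).toNat else fA w (-2 - s).toNat

lemma buildf_symm (w : ℤ → ZMod 2) (s : ℤ) : buildf w (-4 - s) = buildf w s := by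
  unfold buildf
  split_ifs <;> (congr 1; omega)

lemma buildf_step (w : ℤ → ZMod 2) (hsym : ∀ s, w (-2 - s) = w s) (hm1 : w (-1) = 0) (s : ℤ) :
    buildf w s = buildf w (s - 2) + w s := by
  have addself : ∀ a b : ZMod 2, a = a + b + b := by decide
  rcases (by omega : 0 ≤ s ∨ s = -1 ∨ s = -2 ∨ s ≤ -3) with h | h | h | h
  · rw [buildf, if_pos (by omega), buildf, if_pos (by omega)]
    rw [show (s + 2).toNat = (s - 2 + 2).toNat + 2 by omega, fA_step]
    congr 1
    congr 1
    omega
  · subst h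
    have l1 : buildf w (-1) = 0 := by
      rw [buildf, if_pos (by omega), show ((-1 : ℤ) + 2).toNat = 1 by omega]
      rfl
    have l2 : buildf w (-1 - 2) = 0 := by
      rw [buildf, if_neg (by omega), show (-2 - (-1 - 2) : ℤ).toNat = 1 by omega]
      rfl
    rw [l1, l2, hm1, zero_add]
  · subst h
    have l1 : buildf w (-2) = 0 := by
      rw [buildf, if_pos (by omega), show ((-2 : ℤ) + 2).toNat = 0 by omega]
      rfl
    have l2 : buildf w (-2 - 2) = w 0 := by
      rw [buildf, if_neg (by omega), show (-2 - (-2 - 2) : ℤ).toNat = 2 by omega, fA_step]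
      show (0 : ZMod 2) + w 0 = w 0
      rw [zero_add]
    have l3 : w (-2) = w 0 := by simpa using hsym 0
    rw [l1, l2, l3]
    exact (add_self_zmod2 (w 0)).symm
  · rw [buildf, if_neg (by omega), buildf, if_neg (by omega)]
    rw [show (-2 - (s - 2)).toNat = (-2 - s).toNat + 2 by omega, fA_step]
    have harg : (((-2 - s).toNat : ℤ)) = -2 - s := by omega
    rw [harg, hsym s]
    exact addself _ _

/-! ### Periodicity helpers -/

lemma per_mul {f : ℤ → ZMod 2} {p : ℤ} (hp : ∀ s, f (s + p) = f s) :
    ∀ a : ℤ, ∀ s, f (s + p * a) = f s := by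
  intro a
  induction a using Int.induction_on with
  | zero => simp
  | succ k ih =>
    intro s
    rw [show s + p * ((k : ℤ) + 1) = (s + p * k) + p by ring, hp, ih]
  | pred k ih =>
    intro s
    have h := hp (s + p * (-(k : ℤ) - 1))
    rw [show s + p * (-(k : ℤ) - 1) + p = s + p * (-(k : ℤ)) by ring] at h
    rw [← h, ih]

lemma per_two (f : ℤ → ZMod 2) {p q : ℤ} (hp : ∀ s, f (s + p) = f s) (hq : ∀ s, f (s + q) = f s)
    (a b : ℤ) : ∀ s, f (s + (p * a + q * b)) = f s := by
  intro s
  rw [show s + (p * a + q * b) = (s + q * b) + p * a by ring, per_mul hp, per_mul hq]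

/-- A symmetric `2d`-periodic function is computed by folding. -/
lemma rep_eq {d : ℤ} (hd : 0 < d) {f : ℤ → ZMod 2}
    (hsym : ∀ s, f (-4 - s) = f s) (hper : ∀ s, f (s + 2 * d) = f s) (s : ℤ) :
    f (fold d (s + 1) - 1) = f s := by
  have hne : 2 * d ≠ 0 := by omega
  set t := (s + 1 + 1) % (2 * d) with htd
  have h0 : 0 ≤ t := Int.emod_nonneg _ hne
  have h1 : t < 2 * d := Int.emod_lt_of_pos _ (by omega)
  obtain ⟨q, hq⟩ := exists_q d (s + 1)
  have hper' : ∀ a : ℤ, ∀ x, f (x + (2 * d) * a) = f x := per_mul hper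
  have hs : f s = f (t - 2) := by
    have h2 : (2 * d) * q = 2 * (d * q) := by ring
    rw [show s = (t - 2) + (2 * d) * q by omega]
    exact hper' q _
  have hx : fold d (s + 1) = if t ≤ d then t - 1 else 2 * d - 1 - t := fold_of_emod htd.symm
  rw [hx]
  split_ifs with h
  · rw [show t - 1 - 1 = t - 2 by ring, ← hs]
  · rw [show 2 * d - 1 - t - 1 = (-2 - t) + 2 * d by ring, hper,
      show -2 - t = -4 - (t - 2) by ring, hsym, ← hs]

/-! ### Linear maps -/

/-- The main linear map: restrict `psi f` to the grid. -/
def TL (m n : ℤ) : (ℤ → ZMod 2) →ₗ[ZMod 2] (ℤ → ℤ → ZMod 2) where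
  toFun f := fun i j => if InGrid m n i j then psi f i j else 0
  map_add' f g := by
    funext i j
    by_cases h : InGrid m n i j <;> simp [psi, h] <;> ring
  map_smul' c f := by
    funext i j
    by_cases h : InGrid m n i j <;> simp [psi, h] <;> ring

lemma TL_apply (m n : ℤ) (f : ℤ → ZMod 2) (i j : ℤ) :
    TL m n f i j = if InGrid m n i j then psi f i j else 0 := rfl

def idx (d : ℕ) (s : ℤ) : Fin (d + 1) :=
  ⟨min (fold d (s + 1) + 1).toNat d, by omega⟩

lemma idx_val {d : ℕ} (hd : 0 < d) (s : ℤ) : ((idx d s : ℕ) : ℤ) = fold (d : ℤ) (s + 1) + 1 := by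
  obtain ⟨hb1, hb2⟩ := fold_bounds (c := (d : ℤ)) (by exact_mod_cast hd) (s + 1)
  simp only [idx]
  omega

def fcL (d : ℕ) : (Fin (d + 1) → ZMod 2) →ₗ[ZMod 2] (ℤ → ZMod 2) where
  toFun g := fun s => g (idx d s)
  map_add' _ _ := rfl
  map_smul' _ _ := rfl

lemma fcL_apply (d : ℕ) (g : Fin (d + 1) → ZMod 2) (s : ℤ) : fcL d g s = g (idx d s) := rfl

def iotaL (d : ℕ) : (Fin 2 → ZMod 2) →ₗ[ZMod 2] (Fin (d + 1) → ZMod 2) where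
  toFun c := fun t => c ⟨t.val % 2, by omega⟩
  map_add' _ _ := rfl
  map_smul' _ _ := rfl

lemma iota_inj (d : ℕ) (hd : 0 < d) : Function.Injective (iotaL d) := by
  intro c1 c2 h
  funext b
  have h0 := congrFun h (⟨0, by omega⟩ : Fin (d + 1))
  have h1 := congrFun h (⟨1, by omega⟩ : Fin (d + 1))
  fin_cases b
  · exact h0
  · exact h1

lemma two_step {P : ℕ → Prop} (h0 : P 0) (h1 : P 1) (hs : ∀ t, P t → P (t + 2)) : ∀ t, P t := by
  intro t
  induction t using Nat.strong_induction_on with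
  | _ t IH =>
    match t with
    | 0 => exact h0
    | 1 => exact h1
    | (t + 2) => exact hs t (IH t (by omega))

/-! ### Boundary vanishing lemmas for `psi` -/

lemma psi_row_neg (f : ℤ → ZMod 2) (j : ℤ) : psi f (-1) j = 0 := by
  rw [psi, show (-1 : ℤ) + j = j - 1 by ring, show j - (-1) - 2 = j - 1 by ring]
  exact add_self_zmod2 _

lemma psi_row_m (m : ℤ) (f : ℤ → ZMod 2) (hperM : ∀ s, f (s + 2 * (m + 1)) = f s) (j : ℤ) :
    psi f m j = 0 := by
  rw [psi, show m + j = (j - m - 2) + 2 * (m + 1) by ring, hperM]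
  exact add_self_zmod2 _

lemma psi_col_neg (f : ℤ → ZMod 2) (hsym : ∀ s, f (-4 - s) = f s) (i : ℤ) : psi f i (-1) = 0 := by
  rw [psi, show (-1 : ℤ) - i - 2 = -4 - (i + -1) by ring, hsym]
  exact add_self_zmod2 _

lemma psi_col_n (n : ℤ) (f : ℤ → ZMod 2) (hsym : ∀ s, f (-4 - s) = f s)
    (hperN : ∀ s, f (s + 2 * (n + 1)) = f s) (i : ℤ) : psi f i n = 0 := by
  rw [psi, show n - i - 2 = (-4 - (i + n)) + 2 * (n + 1) by ring, hperN, hsym]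
  exact add_self_zmod2 _

lemma TL_mem_harm (m n : ℤ) (f : ℤ → ZMod 2)
    (hsym : ∀ s, f (-4 - s) = f s)
    (hperM : ∀ s, f (s + 2 * (m + 1)) = f s)
    (hperN : ∀ s, f (s + 2 * (n + 1)) = f s) :
    TL m n f ∈ harm m n := by
  constructor
  · intro i j h
    rw [TL_apply, if_neg h]
  · intro i j hg
    obtain ⟨hi0, hi1, hj0, hj1⟩ := hg
    have e1 : TL m n f (i - 1) j = psi f (i - 1) j := by
      by_cases h : InGrid m n (i - 1) j
      · rw [TL_apply, if_pos h]
      · have hi : i - 1 = -1 := by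
          by_contra hne
          exact h ⟨by omega, by omega, hj0, hj1⟩
        rw [TL_apply, if_neg h, hi, psi_row_neg]
    have e2 : TL m n f (i + 1) j = psi f (i + 1) j := by
      by_cases h : InGrid m n (i + 1) j
      · rw [TL_apply, if_pos h]
      · have hi : i + 1 = m := by
          by_contra hne
          exact h ⟨by omega, by omega, hj0, hj1⟩
        rw [TL_apply, if_neg h, hi, psi_row_m m f hperM]
    have e3 : TL m n f i (j - 1) = psi f i (j - 1) := by
      by_cases h : InGrid m n i (j - 1)
      · rw [TL_apply, if_pos h]
      · have hj : j - 1 = -1 := by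
          by_contra hne
          exact h ⟨hi0, hi1, by omega, by omega⟩
        rw [TL_apply, if_neg h, hj, psi_col_neg f hsym]
    have e4 : TL m n f i (j + 1) = psi f i (j + 1) := by
      by_cases h : InGrid m n i (j + 1)
      · rw [TL_apply, if_pos h]
      · have hj : j + 1 = n := by
          by_contra hne
          exact h ⟨hi0, hi1, by omega, by omega⟩
        rw [TL_apply, if_neg h, hj, psi_col_n n f hsym hperN]
    rw [e1, e2, e3, e4]
    exact psi_harm f i j

end HarmonicDim


namespace HarmonicDim

lemma exists_preimage (m n : ℤ) (hm : 2 ≤ m) (hn : 2 ≤ n) (v : ℤ → ℤ → ZMod 2)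
    (hv0 : ∀ i j : ℤ, ¬ InGrid m n i j → v i j = 0)
    (hv1 : ∀ i j : ℤ, InGrid m n i j →
      v (i - 1) j + v (i + 1) j + v i (j - 1) + v i (j + 1) = 0) :
    ∃ g : Fin (Int.gcd (m + 1) (n + 1) + 1) → ZMod 2,
      TL m n (fcL (Int.gcd (m + 1) (n + 1)) g) = v := by
  have hM : (0 : ℤ) < m + 1 := by omega
  have hM2 : (2 : ℤ) ≤ m + 1 := by omega
  have hN : (0 : ℤ) < n + 1 := by omega
  have hN2 : (2 : ℤ) ≤ n + 1 := by omega
  have c7 : ∀ a b : ZMod 2, a + b = 0 → a = b := by decide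
  set K : ℕ := Int.gcd (m + 1) (n + 1) with hKdef
  have hK0 : 0 < K := by
    rcases Nat.eq_zero_or_pos K with h | h
    · exfalso
      rw [hKdef] at h
      obtain ⟨h1, h2⟩ := Int.gcd_eq_zero_iff.mp h
      omega
    · exact h
  set V : ℤ → ℤ → ZMod 2 := fun x y => v (fold (m + 1) x) (fold (n + 1) y) with hVdef
  have hnotgrid_i : ∀ i j : ℤ, (i = -1 ∨ i = m) → v i j = 0 := by
    intro i j h
    apply hv0
    intro hg
    obtain ⟨a, b, _, _⟩ := hg
    omega
  have hnotgrid_j : ∀ i j : ℤ, (j = -1 ∨ j = n) → v i j = 0 := by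
    intro i j h
    apply hv0
    intro hg
    obtain ⟨_, _, a, b⟩ := hg
    omega
  have hVharm : ∀ x y, V (x - 1) y + V (x + 1) y + V x (y - 1) + V x (y + 1) = 0 := by
    intro x y
    have addz : ∀ a : ZMod 2, a + a + 0 + 0 = 0 := by decide
    have addz3 : ∀ a : ZMod 2, 0 + 0 + a + a = 0 := by decide
    simp only [hVdef]
    rcases fold_nbrs hM2 x with ⟨hx0, hx1, hxm, hxp⟩ | ⟨hx0, hx1, hxm, hxp⟩ |
      ⟨hx, hxm, hxp⟩ | ⟨hx, hxm, hxp⟩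
    · rcases fold_nbrs hN2 y with ⟨hy0, hy1, hym, hyp⟩ | ⟨hy0, hy1, hym, hyp⟩ |
        ⟨hy, hym, hyp⟩ | ⟨hy, hym, hyp⟩
      · have hq := hv1 _ _ ⟨hx0, by omega, hy0, by omega⟩
        rw [hxm, hxp, hym, hyp]
        linear_combination hq
      · have hq := hv1 _ _ ⟨hx0, by omega, hy0, by omega⟩
        rw [hxm, hxp, hym, hyp]
        linear_combination hq
      · rw [hym, hyp, hy, hnotgrid_j (fold (m + 1) (x - 1)) (-1) (Or.inl rfl),
          hnotgrid_j (fold (m + 1) (x + 1)) (-1) (Or.inl rfl)]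
        exact addz3 _
      · rw [hym, hyp, hy, hnotgrid_j (fold (m + 1) (x - 1)) (n + 1 - 1) (Or.inr (by omega)),
          hnotgrid_j (fold (m + 1) (x + 1)) (n + 1 - 1) (Or.inr (by omega))]
        exact addz3 _
    · rcases fold_nbrs hN2 y with ⟨hy0, hy1, hym, hyp⟩ | ⟨hy0, hy1, hym, hyp⟩ |
        ⟨hy, hym, hyp⟩ | ⟨hy, hym, hyp⟩
      · have hq := hv1 _ _ ⟨hx0, by omega, hy0, by omega⟩
        rw [hxm, hxp, hym, hyp]
        linear_combination hq
      · have hq := hv1 _ _ ⟨hx0, by omega, hy0, by omega⟩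
        rw [hxm, hxp, hym, hyp]
        linear_combination hq
      · rw [hym, hyp, hy, hnotgrid_j (fold (m + 1) (x - 1)) (-1) (Or.inl rfl),
          hnotgrid_j (fold (m + 1) (x + 1)) (-1) (Or.inl rfl)]
        exact addz3 _
      · rw [hym, hyp, hy, hnotgrid_j (fold (m + 1) (x - 1)) (n + 1 - 1) (Or.inr (by omega)),
          hnotgrid_j (fold (m + 1) (x + 1)) (n + 1 - 1) (Or.inr (by omega))]
        exact addz3 _
    · rw [hxm, hxp, hx, hnotgrid_i (-1) (fold (n + 1) (y - 1)) (Or.inl rfl),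
        hnotgrid_i (-1) (fold (n + 1) (y + 1)) (Or.inl rfl)]
      exact addz _
    · rw [hxm, hxp, hx, hnotgrid_i (m + 1 - 1) (fold (n + 1) (y - 1)) (Or.inr (by omega)),
        hnotgrid_i (m + 1 - 1) (fold (n + 1) (y + 1)) (Or.inr (by omega))]
      exact addz _
  set w : ℤ → ZMod 2 := fun j => V 0 j with hwdef
  have hsymw : ∀ s, w (-2 - s) = w s := by
    intro s
    simp only [hwdef, hVdef]
    rw [fold_reflect hN s]
  have hw1 : w (-1) = 0 := by
    simp only [hwdef, hVdef]
    rw [fold_eq_self (c := n + 1) (x := -1) hN (by omega) (by omega)]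
    exact hnotgrid_j _ _ (Or.inl rfl)
  set f : ℤ → ZMod 2 := buildf w with hfdef
  have hsymf : ∀ s, f (-4 - s) = f s := fun s => buildf_symm w s
  have hstep : ∀ s, f s = f (s - 2) + w s := buildf_step w hsymw hw1
  have hstep' : ∀ s, f s + f (s - 2) = w s := by
    intro s
    have hh : ∀ a b c : ZMod 2, a = b + c → a + b = c := by decide
    exact hh _ _ _ (hstep s)
  have row0 : ∀ y, psi f 0 y = V 0 y := by
    intro y
    simp only [psi]
    rw [show (0 : ℤ) + y = y by ring, show y - 0 - 2 = y - 2 by ring]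
    exact hstep' y
  have row1 : ∀ y, psi f 1 y = V 1 y := by
    intro y
    have c5 : ∀ a b c p q : ZMod 2, a = b + p → b = c + q → a + c = p + q := by decide
    have lhs : f (1 + y) + f (y - 1 - 2) = w (y + 1) + w (y - 1) := by
      have h1 := hstep (y + 1)
      have h2 := hstep (y - 1)
      rw [show y + 1 - 2 = y - 1 by ring] at h1
      rw [show (1 : ℤ) + y = y + 1 by ring]
      exact c5 _ _ _ _ _ h1 h2
    have rhs : V 1 y = w (y - 1) + w (y + 1) := by
      have hq := hVharm 0 y
      rw [show (0 : ℤ) - 1 = -1 by ring, show (0 : ℤ) + 1 = 1 by ring] at hq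
      have hz : V (-1) y = 0 := by
        simp only [hVdef]
        rw [fold_eq_self (c := m + 1) (x := -1) hM (by omega) (by omega)]
        exact hnotgrid_i _ _ (Or.inl rfl)
      rw [hz] at hq
      have c6 : ∀ b c d : ZMod 2, 0 + b + c + d = 0 → b = c + d := by decide
      exact c6 _ _ _ hq
    simp only [psi]
    rw [lhs, rhs]
    exact add_comm _ _
  have hpsiV : ∀ x y, psi f x y = V x y :=
    harm2_unique (fun x y => psi f x y) V (fun x y => psi_harm f x y) hVharm row0 row1
  have perM : ∀ s, f (s + 2 * (m + 1)) = f s := by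
    have hline : ∀ j, f (m + j) = f (j - m - 2) := by
      intro j
      have h := hpsiV m j
      have hz : V m j = 0 := by
        simp only [hVdef]
        rw [fold_eq_self (c := m + 1) (x := m) hM (by omega) (by omega)]
        exact hnotgrid_i _ _ (Or.inr rfl)
      simp only [psi] at h
      rw [hz] at h
      exact c7 _ _ h
    intro s
    have h := hline (s + m + 2)
    rw [show m + (s + m + 2) = s + 2 * (m + 1) by ring,
      show s + m + 2 - m - 2 = s by ring] at h
    exact h
  have perN : ∀ s, f (s + 2 * (n + 1)) = f s := by
    have hline : ∀ i, f (i + n) = f (n - i - 2) := by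
      intro i
      have h := hpsiV i n
      have hz : V i n = 0 := by
        simp only [hVdef]
        rw [fold_eq_self (c := n + 1) (x := n) hN (by omega) (by omega)]
        exact hnotgrid_j _ _ (Or.inr rfl)
      simp only [psi] at h
      rw [hz] at h
      exact c7 _ _ h
    intro s
    have h := hline (s + n + 2)
    rw [show s + n + 2 + n = s + 2 * (n + 1) by ring,
      show n - (s + n + 2) - 2 = -4 - s by ring] at h
    rw [h, hsymf]
  have hbez : ((K : ℕ) : ℤ) =
      (m + 1) * Int.gcdA (m + 1) (n + 1) + (n + 1) * Int.gcdB (m + 1) (n + 1) := by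
    rw [hKdef]
    exact Int.gcd_eq_gcd_ab _ _
  have perK : ∀ s, f (s + 2 * (K : ℤ)) = f s := by
    intro s
    have h := per_two f perM perN (Int.gcdA (m + 1) (n + 1)) (Int.gcdB (m + 1) (n + 1)) s
    rw [show s + (2 * (m + 1) * Int.gcdA (m + 1) (n + 1) +
        2 * (n + 1) * Int.gcdB (m + 1) (n + 1))
        = s + 2 * ((m + 1) * Int.gcdA (m + 1) (n + 1) +
          (n + 1) * Int.gcdB (m + 1) (n + 1)) by ring, ← hbez] at h
    exact h
  have hTLf : TL m n f = v := by
    funext i j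
    rw [TL_apply]
    split_ifs with h
    · obtain ⟨hi0, hi1, hj0, hj1⟩ := h
      rw [hpsiV i j]
      simp only [hVdef]
      rw [fold_eq_self (c := m + 1) (x := i) hM (by omega) (by omega),
        fold_eq_self (c := n + 1) (x := j) hN (by omega) (by omega)]
    · exact (hv0 i j h).symm
  refine ⟨fun t => f ((t.val : ℤ) - 2), ?_⟩
  have hfc : fcL K (fun t => f ((t.val : ℤ) - 2)) = f := by
    funext s
    rw [fcL_apply]
    show f ((((idx K s).val : ℕ) : ℤ) - 2) = f s
    rw [idx_val hK0 s, show (fold (K : ℤ) (s + 1) + 1) - 2 = fold (K : ℤ) (s + 1) - 1 by ring]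
    exact rep_eq (d := (K : ℤ)) (by exact_mod_cast hK0) hsymf perK s
  rw [hfc, hTLf]

lemma ker_sub (m n : ℤ) (hm : 2 ≤ m) (hn : 2 ≤ n)
    (g : Fin (Int.gcd (m + 1) (n + 1) + 1) → ZMod 2)
    (hzero : TL m n (fcL (Int.gcd (m + 1) (n + 1)) g) = 0) :
    ∃ c : Fin 2 → ZMod 2, iotaL (Int.gcd (m + 1) (n + 1)) c = g := by
  revert g
  set K : ℕ := Int.gcd (m + 1) (n + 1) with hKdef
  have hK0 : 0 < K := by
    rcases Nat.eq_zero_or_pos K with h | h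
    · exfalso
      rw [hKdef] at h
      obtain ⟨h1, h2⟩ := Int.gcd_eq_zero_iff.mp h
      omega
    · exact h
  have hKZ : (0 : ℤ) < (K : ℤ) := by exact_mod_cast hK0
  have hKN : ((K : ℕ) : ℤ) ≤ n + 1 := by
    apply Int.le_of_dvd (by omega)
    rw [hKdef]
    exact Int.gcd_dvd_right _ _
  intro g hzero
  set f : ℤ → ZMod 2 := fcL K g with hfdef
  have hpsi0 : ∀ i j, InGrid m n i j → psi f i j = 0 := by
    intro i j h
    have hc := congrFun (congrFun hzero i) j
    rw [TL_apply, if_pos h] at hc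
    exact hc.trans rfl
  have chain : ∀ j : ℤ, 0 ≤ j → j ≤ n - 1 → f j = f (j - 2) := by
    intro j h1 h2
    have h := hpsi0 0 j ⟨le_refl 0, by omega, h1, h2⟩
    simp only [psi] at h
    rw [show (0 : ℤ) + j = j by ring, show j - 0 - 2 = j - 2 by ring] at h
    have c7 : ∀ a b : ZMod 2, a + b = 0 → a = b := by decide
    exact c7 _ _ h
  have collapse : ∀ t : ℕ, ((t : ℕ) : ℤ) ≤ n + 1 → f ((t : ℤ) - 2) = f (((t % 2 : ℕ) : ℤ) - 2) := by
    refine two_step ?_ ?_ ?_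
    · intro _
      rfl
    · intro _
      rfl
    · intro t ih hbound
      have hb : ((t : ℕ) : ℤ) ≤ n + 1 := by push_cast at hbound ⊢; omega
      have e1 : ((t + 2 : ℕ) : ℤ) - 2 = (t : ℤ) := by push_cast; ring
      have e2 : ((t + 2) % 2 : ℕ) = (t % 2 : ℕ) := by omega
      rw [e1, e2]
      have h := chain (t : ℤ) (by positivity) (by push_cast at hbound ⊢; omega)
      rw [h]
      exact ih hb
  have gval : ∀ u : Fin (K + 1), f ((u.val : ℤ) - 2) = g u := by
    intro u
    have hu := u.isLt
    rw [hfdef, fcL_apply]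
    congr 1
    have hfold : fold (K : ℤ) ((u.val : ℤ) - 2 + 1) = (u.val : ℤ) - 2 + 1 :=
      fold_eq_self hKZ (by omega) (by omega)
    apply Fin.ext
    simp only [idx]
    rw [hfold]
    omega
  have key : ∀ t : Fin (K + 1), g t = g ⟨t.val % 2, by omega⟩ := by
    intro t
    have hu := t.isLt
    rw [← gval t, ← gval ⟨t.val % 2, by omega⟩]
    exact collapse t.val (by omega)
  refine ⟨fun b => g ⟨b.val, by omega⟩, ?_⟩
  funext t
  show g ⟨t.val % 2, by omega⟩ = g t
  exact (key t).symm

lemma iota_in_ker (m n : ℤ) (hm : 2 ≤ m) (hn : 2 ≤ n) (c : Fin 2 → ZMod 2) :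
    TL m n (fcL (Int.gcd (m + 1) (n + 1)) (iotaL (Int.gcd (m + 1) (n + 1)) c)) = 0 := by
  set K : ℕ := Int.gcd (m + 1) (n + 1) with hKdef
  have hK0 : 0 < K := by
    rcases Nat.eq_zero_or_pos K with h | h
    · exfalso
      rw [hKdef] at h
      obtain ⟨h1, h2⟩ := Int.gcd_eq_zero_iff.mp h
      omega
    · exact h
  have hKZ : (0 : ℤ) < (K : ℤ) := by exact_mod_cast hK0
  funext i j
  rw [TL_apply]
  split_ifs with h
  · simp only [psi, fcL_apply]
    have hpar : ∀ s1 s2 : ℤ, (s1 - s2) % 2 = 0 → (idx K s1).val % 2 = (idx K s2).val % 2 := by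
      intro s1 s2 hp
      have e1 := idx_val hK0 s1
      have e2 := idx_val hK0 s2
      have p1 := fold_parity (c := (K : ℤ)) (x := s1 + 1) hKZ
      have p2 := fold_parity (c := (K : ℤ)) (x := s2 + 1) hKZ
      omega
    have hpq := hpar (i + j) (j - i - 2) (by omega)
    show c ⟨(idx K (i + j)).val % 2, by omega⟩ + c ⟨(idx K (j - i - 2)).val % 2, by omega⟩ = 0
    have hfin : (⟨(idx K (i + j)).val % 2, by omega⟩ : Fin 2) =
        ⟨(idx K (j - i - 2)).val % 2, by omega⟩ := Fin.ext hpq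
    rw [hfin]
    exact add_self_zmod2 _
  · rfl

end HarmonicDim


/-- the 𝔽₂-dimension of the space of harmonic functions on the
m×n rectangular grid equals gcd(m+1, n+1) − 1. -/
theorem harmonic_dimension (m n : ℤ) (hm : 2 ≤ m) (hn : 2 ≤ n) :
    Module.finrank (ZMod 2) (harm m n) = Int.gcd (m + 1) (n + 1) - 1 := by
  classical
  open HarmonicDim in
  set K : ℕ := Int.gcd (m + 1) (n + 1) with hKdef
  have hK0 : 0 < K := by
    rcases Nat.eq_zero_or_pos K with h | h
    · exfalso
      rw [hKdef] at h
      obtain ⟨h1, h2⟩ := Int.gcd_eq_zero_iff.mp h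
      omega
    · exact h
  have hKZ : (0 : ℤ) < (K : ℤ) := by exact_mod_cast hK0
  set Θ : (Fin (K + 1) → ZMod 2) →ₗ[ZMod 2] (ℤ → ℤ → ZMod 2) :=
    (TL m n).comp (fcL K) with hTdef
  have hrange : LinearMap.range Θ = harm m n := by
    apply le_antisymm
    · rintro x ⟨g, rfl⟩
      show TL m n (fcL K g) ∈ harm m n
      have hperK : ∀ s, fcL K g (s + 2 * (K : ℤ)) = fcL K g s := by
        intro s
        rw [fcL_apply, fcL_apply]
        congr 1
        apply Fin.ext
        simp only [idx]
        rw [show s + 2 * (K : ℤ) + 1 = (s + 1) + 2 * (K : ℤ) by ring, fold_period]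
      apply TL_mem_harm
      · intro s
        rw [fcL_apply, fcL_apply]
        congr 1
        apply Fin.ext
        simp only [idx]
        rw [show -4 - s + 1 = -2 - (s + 1) by ring, fold_reflect hKZ]
      · obtain ⟨e, he⟩ : ((K : ℤ)) ∣ (m + 1) := by
          rw [hKdef]
          exact Int.gcd_dvd_left _ _
        intro s
        rw [show s + 2 * (m + 1) = s + 2 * (K : ℤ) * e by rw [he]; ring]
        exact per_mul hperK e s
      · obtain ⟨e, he⟩ : ((K : ℤ)) ∣ (n + 1) := by
          rw [hKdef]
          exact Int.gcd_dvd_right _ _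
        intro s
        rw [show s + 2 * (n + 1) = s + 2 * (K : ℤ) * e by rw [he]; ring]
        exact per_mul hperK e s
    · intro v hv
      obtain ⟨hv0, hv1⟩ := hv
      obtain ⟨g, hg⟩ := exists_preimage m n hm hn v hv0 hv1
      exact ⟨g, hg⟩
  have hker : LinearMap.ker Θ = LinearMap.range (iotaL K) := by
    apply le_antisymm
    · intro g hg
      have hz : TL m n (fcL K g) = 0 := LinearMap.mem_ker.mp hg
      obtain ⟨c, hc⟩ := ker_sub m n hm hn g hz
      exact ⟨c, hc⟩
    · rintro g ⟨c, rfl⟩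
      exact LinearMap.mem_ker.mpr (iota_in_ker m n hm hn c)
  have hrn := LinearMap.finrank_range_add_finrank_ker Θ
  rw [hrange, hker, LinearMap.finrank_range_of_inj (iota_inj K hK0),
    Module.finrank_fin_fun, Module.finrank_fin_fun] at hrn
  omega
end

section
/- Let m, n ≥ 2 be integers, c = gcd(m+1, n+1) − 1, β = (c + (c mod 2))/2 and ω = (c − (c mod 2))/2. Then the number of nonzero polarized harmonic functions on the m×n rectangular grid, i.e. the cardinality of (ker BW ∖ {0}) ∪ (ker WB ∖ {0}), equals 2^β + 2^ω − 2. -/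
namespace CNP

/-- Fold `ℤ` onto `[-1, N-1]` by reflections about `-1` and `N-1` (period `2N`). -/
def foldI (N x : ℤ) : ℤ := if x % (2*N) ≤ N - 1 then x % (2*N) else 2*N - 2 - x % (2*N)

section fold
variable {N : ℤ} (hN : 2 ≤ N)
include hN

lemma emod_lb (x : ℤ) : 0 ≤ x % (2*N) := Int.emod_nonneg x (by omega)
lemma emod_ub (x : ℤ) : x % (2*N) < 2*N := Int.emod_lt_of_pos x (by omega)

lemma emod_succ (x : ℤ) :
    (x+1) % (2*N) = if x % (2*N) = 2*N - 1 then 0 else x % (2*N) + 1 := by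
  have h0 := emod_lb hN x; have h1 := emod_ub hN x
  have h2 : (x+1) % (2*N) = (x % (2*N) + 1) % (2*N) := by
    conv_lhs => rw [Int.add_emod]
    rw [Int.emod_eq_of_lt (by omega) (by omega : (1:ℤ) < 2*N)]
  by_cases h : x % (2*N) = 2*N - 1
  · simp only [h, if_pos rfl] at h2 ⊢
    rw [h2]; simpa using Int.emod_self (a := 2*N)
  · rw [if_neg h, h2, Int.emod_eq_of_lt (by omega) (by omega)]

lemma emod_pred (x : ℤ) :
    (x-1) % (2*N) = if x % (2*N) = 0 then 2*N - 1 else x % (2*N) - 1 := by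
  have h0 := emod_lb hN (x-1); have h1 := emod_ub hN (x-1)
  have h := emod_succ hN (x-1)
  rw [sub_add_cancel] at h
  by_cases hz : (x-1) % (2*N) = 2*N - 1
  · rw [if_pos hz] at h; rw [if_pos h]; exact hz
  · rw [if_neg hz] at h
    rw [if_neg (by omega)]; omega

lemma foldI_id {x : ℤ} (h0 : 0 ≤ x) (h1 : x ≤ N - 1) : foldI N x = x := by
  unfold foldI; rw [Int.emod_eq_of_lt h0 (by omega)]; simp [h1]

lemma foldI_N : foldI N N = N - 2 := by
  unfold foldI; rw [Int.emod_eq_of_lt (by omega) (by omega)]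
  rw [if_neg (by omega)]; ring

lemma foldI_range (x : ℤ) : -1 ≤ foldI N x ∧ foldI N x ≤ N - 1 := by
  have h0 := emod_lb hN x; have h1 := emod_ub hN x
  unfold foldI; split <;> omega

lemma foldI_period (x : ℤ) : foldI N (x + 2*N) = foldI N x := by
  have h : (x + 2*N) % (2*N) = x % (2*N) := by
    conv_lhs => rw [show x + 2*N = x + (2*N)*1 by ring]
    rw [Int.add_mul_emod_self_left]
  unfold foldI; rw [h]

lemma foldI_reflect (x : ℤ) : foldI N (-2-x) = foldI N x := by
  have h0 := emod_lb hN x; have h1 := emod_ub hN x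
  have key : (-2-x) % (2*N) = (2*N - 2 - x % (2*N)) % (2*N) := by
    conv_lhs => rw [show -2-x = 2*N - 2 - x + (2*N) * (-1) by ring]
    rw [Int.add_mul_emod_self_left, Int.sub_emod (2*N-2) x]
    rw [Int.emod_eq_of_lt (by omega) (by omega : 2*N-2 < 2*N)]
  unfold foldI
  rw [key]
  by_cases hx : x % (2*N) = 2*N - 1
  · rw [hx]
    have h2 : (2*N - 2 - (2*N-1)) % (2*N) = 2*N - 1 := by
      rw [show 2*N - 2 - (2*N-1) = 2*N - 1 + (2*N) * (-1) by ring, Int.add_mul_emod_self_left,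
          Int.emod_eq_of_lt (by omega) (by omega)]
    rw [h2]
  · have h2 : (2*N - 2 - x % (2*N)) % (2*N) = 2*N - 2 - x % (2*N) :=
      Int.emod_eq_of_lt (by omega) (by omega)
    rw [h2]
    by_cases h3 : x % (2*N) ≤ N - 1
    · by_cases h4 : 2*N - 2 - x % (2*N) ≤ N - 1
      · rw [if_pos h4, if_pos h3]; omega
      · rw [if_neg h4, if_pos h3]; ring
    · rw [if_pos (by omega), if_neg h3]

/-- neighbour structure of the fold. -/
lemma foldI_step (x : ℤ) :
    (foldI N x = -1 ∧ foldI N (x-1) = 0 ∧ foldI N (x+1) = 0) ∨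
    (foldI N x = N-1 ∧ foldI N (x-1) = N-2 ∧ foldI N (x+1) = N-2) ∨
    (0 ≤ foldI N x ∧ foldI N x ≤ N-2 ∧
      ((foldI N (x-1) = foldI N x - 1 ∧ foldI N (x+1) = foldI N x + 1) ∨
       (foldI N (x-1) = foldI N x + 1 ∧ foldI N (x+1) = foldI N x - 1))) := by
  have h0 := emod_lb hN x; have h1 := emod_ub hN x
  have hs := emod_succ hN x
  have hp := emod_pred hN x
  unfold foldI
  by_cases hA : x % (2*N) = 2*N - 1
  · left
    rw [if_pos hA] at hs
    rw [if_neg (by omega)] at hp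
    rw [hA, hs, hp, if_neg (by omega), if_neg (by omega), if_pos (by omega)]
    refine ⟨by ring, by omega, rfl⟩
  · rw [if_neg hA] at hs
    by_cases hB : x % (2*N) = N - 1
    · right; left
      rw [if_neg (by omega)] at hp
      rw [hB, hs, hp, hB, if_pos le_rfl, if_pos (by omega), if_neg (by omega)]
      refine ⟨rfl, by omega, by ring⟩
    · right; right
      by_cases hC : x % (2*N) ≤ N - 1
      · by_cases hD : x % (2*N) = 0
        · rw [if_pos hD] at hp
          rw [hD, hs, hp, hD, if_pos (by omega), if_neg (by omega), if_pos (by omega)]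
          exact ⟨le_rfl, by omega, Or.inl ⟨by ring, by ring⟩⟩
        · rw [if_neg hD] at hp
          rw [hs, hp, if_pos hC, if_pos (by omega), if_pos (by omega)]
          exact ⟨by omega, by omega, Or.inl ⟨rfl, rfl⟩⟩
      · rw [if_neg (by omega)] at hp
        rw [hs, hp, if_neg hC, if_neg (show ¬ (x % (2*N) + 1 ≤ N - 1) by omega)]
        by_cases hE : x % (2*N) = N
        · rw [if_pos (show x % (2*N) - 1 ≤ N - 1 by omega)]
          exact ⟨by omega, by omega, Or.inr ⟨by omega, by omega⟩⟩
        · rw [if_neg (show ¬ (x % (2*N) - 1 ≤ N - 1) by omega)]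
          exact ⟨by omega, by omega, Or.inr ⟨by ring, by ring⟩⟩

lemma foldI_neg_one : foldI N (-1) = -1 := by
  unfold foldI
  have h : (-1) % (2*N) = 2*N - 1 := by
    rw [show (-1:ℤ) = 2*N - 1 + (2*N) * (-1) by ring, Int.add_mul_emod_self_left,
        Int.emod_eq_of_lt (by omega) (by omega)]
  rw [h, if_neg (by omega)]; ring

omit hN in
lemma foldI_parity (x : ℤ) : foldI N x % 2 = x % 2 := by
  have h2 : x % (2*N) % 2 = x % 2 := Int.emod_emod_of_dvd x ⟨N, by ring⟩
  unfold foldI; split <;> omega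


end fold

lemma z2_swap {a b c d : ZMod 2} (h : a + b + c + d = 0) : a + d = b + c := by
  revert a b c d; decide

lemma z2_rearr {a b c d : ZMod 2} (h : a + b + c + d = 0) : b + d = c + a := by
  revert a b c d; decide

lemma z2_of_add_eq_zero {a b : ZMod 2} (h : a + b = 0) : a = b := by
  revert a b; decide

lemma z2_addadd (a h : ZMod 2) : a = a + h + h := by revert a h; decide

lemma z2_move {a b c : ZMod 2} (h : a + b = c) : a = c + b := by revert a b c; decide

lemma z2_zsum {a b : ZMod 2} (h : (0:ZMod 2) = a + b) : b = a := by revert a b; decide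

lemma z2_comb {A B H Q X P : ZMod 2} (e1 : A + B = H) (e2 : Q = X + H) (e3 : A + Q = P) :
    B + X = P := by revert A B H Q X P; decide

lemma z2_comb' {A B H Q X P : ZMod 2} (e1 : A + B = H) (e2 : Q = X + H) (e3 : A + X = P) :
    B + Q = P := by revert A B H Q X P; decide

/-! ### Plane extension of a harmonic function and its diagonal structure -/

section ext
variable (m n : ℤ) (v : ℤ → ℤ → ZMod 2)

/-- extension of `v` to the whole plane by reflections. -/
def wx (i j : ℤ) : ZMod 2 := v (foldI (m+1) i) (foldI (n+1) j)

/-- diagonal invariant. -/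
def hd (d : ℤ) : ZMod 2 := wx m n v (d+1) 0 + wx m n v d 1

/-- partial sums of `hd` along a 2-step progression, with `Qd 0 = Qd 1 = 0`. -/
def Qd (x : ℤ) : ZMod 2 :=
  if 0 ≤ x then
    ∑ i ∈ Finset.range x.toNat, (if 1 ≤ i ∧ (i + x.toNat) % 2 = 1 then hd m n v i else 0)
  else
    ∑ i ∈ Finset.range (-x).toNat, (if (i + (-x).toNat) % 2 = 1 then hd m n v (-(i:ℤ)) else 0)

def Pd (σ : ℤ) : ZMod 2 := wx m n v σ 0 + Qd m n v σ

variable {m n v}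
variable (hm : 2 ≤ m) (hn : 2 ≤ n)

lemma two_le_m1 {m : ℤ} (hm : 2 ≤ m) : (2:ℤ) ≤ m + 1 := by omega
lemma two_le_n1 {n : ℤ} (hn : 2 ≤ n) : (2:ℤ) ≤ n + 1 := by omega

section harmext
variable (hv : IsHarmonic m n v)
include hm hn hv

lemma wx_grid {i j : ℤ} (h : InGrid m n i j) : wx m n v i j = v i j := by
  obtain ⟨h1, h2, h3, h4⟩ := h
  unfold wx
  rw [foldI_id (two_le_m1 hm) h1 (by omega), foldI_id (two_le_n1 hn) h3 (by omega)]

lemma wz_left (j : ℤ) : wx m n v (-1) j = 0 := by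
  unfold wx
  rw [foldI_neg_one (two_le_m1 hm)]
  exact hv.1 _ _ (by simp only [InGrid]; omega)

lemma wz_right (j : ℤ) : wx m n v m j = 0 := by
  unfold wx
  rw [foldI_id (two_le_m1 hm) (by omega) (by omega)]
  exact hv.1 _ _ (by simp only [InGrid]; omega)

lemma wz_bot (i : ℤ) : wx m n v i (-1) = 0 := by
  unfold wx
  rw [foldI_neg_one (two_le_n1 hn)]
  exact hv.1 _ _ (by simp only [InGrid]; omega)

lemma wz_top (i : ℤ) : wx m n v i n = 0 := by
  unfold wx
  rw [foldI_id (two_le_n1 hn) (by omega) (by omega)]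
  exact hv.1 _ _ (by simp only [InGrid]; omega)

/-- the extension satisfies the wave equation everywhere. -/
lemma wave (i j : ℤ) :
    wx m n v (i-1) j + wx m n v (i+1) j + wx m n v i (j-1) + wx m n v i (j+1) = 0 := by
  have hm1 := two_le_m1 hm
  have hn1 := two_le_n1 hn
  unfold wx
  rcases foldI_step hm1 i with ⟨h1, h2, h3⟩ | ⟨h1, h2, h3⟩ | ⟨h1a, h1b, ho⟩
  · rw [h1, h2, h3, hv.1 (-1) _ (by simp only [InGrid]; omega),
      hv.1 (-1) _ (by simp only [InGrid]; omega), CharTwo.add_self_eq_zero]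
    simp
  · rw [h1, h2, h3, hv.1 ((m+1)-1) _ (by simp only [InGrid]; omega),
      hv.1 ((m+1)-1) _ (by simp only [InGrid]; omega), CharTwo.add_self_eq_zero]
    simp
  · rcases foldI_step hn1 j with ⟨g1, g2, g3⟩ | ⟨g1, g2, g3⟩ | ⟨g1a, g1b, go⟩
    · rw [g1, g2, g3, hv.1 _ (-1) (by simp only [InGrid]; omega),
        hv.1 _ (-1) (by simp only [InGrid]; omega), CharTwo.add_self_eq_zero]
      simp [CharTwo.add_self_eq_zero]
    · rw [g1, g2, g3, hv.1 _ ((n+1)-1) (by simp only [InGrid]; omega),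
        hv.1 _ ((n+1)-1) (by simp only [InGrid]; omega), CharTwo.add_self_eq_zero]
      simp [CharTwo.add_self_eq_zero]
    · have hg : InGrid m n (foldI (m+1) i) (foldI (n+1) j) := by
        simp only [InGrid]; omega
      have hh := hv.2 _ _ hg
      rcases ho with ⟨o1, o2⟩ | ⟨o1, o2⟩ <;> rcases go with ⟨p1, p2⟩ | ⟨p1, p2⟩ <;>
        rw [o1, o2, p1, p2] <;> linear_combination hh

/-- fundamental diagonal-translation invariance. -/
lemma ustep (i j : ℤ) :
    wx m n v (i+1) j + wx m n v i (j+1) = wx m n v i (j-1) + wx m n v (i-1) j := by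
  exact z2_rearr (wave hm hn hv i j)

lemma u_diag : ∀ j i : ℤ, wx m n v (i+1) j + wx m n v i (j+1) = hd m n v (i-j) := by
  intro j
  induction j using Int.induction_on with
  | zero => intro i; rw [sub_zero]; unfold hd; norm_num
  | succ k ih =>
    intro i
    have e1 := ustep hm hn hv i (k+1)
    rw [show (k:ℤ)+1-1 = k by ring] at e1
    have e2 := ih (i-1)
    rw [show i-1+1 = i by ring] at e2
    rw [show i - ((k:ℤ)+1) = i-1-k by ring, ← e2]
    exact e1
  | pred k ih =>
    intro i
    have e1 := ustep hm hn hv (i+1) (-(k:ℤ))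
    rw [show i+1-1 = i by ring] at e1
    have e2 := ih (i+1)
    rw [show (-(k:ℤ)-1)+1 = -(k:ℤ) by ring,
      show i - (-(k:ℤ)-1) = i+1 - (-(k:ℤ)) by ring, ← e2]
    exact e1.symm

omit hv in
lemma Qd_step (x : ℤ) : Qd m n v (x+2) = Qd m n v x + hd m n v (x+1) := by
  rcases le_or_gt 0 x with hx | hx
  · have ht : (x+2).toNat = x.toNat + 2 := by omega
    unfold Qd
    rw [if_pos (by omega : (0:ℤ) ≤ x + 2), if_pos hx, ht]
    rw [Finset.sum_range_succ, Finset.sum_range_succ]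
    have c1 : (if 1 ≤ x.toNat ∧ (x.toNat + (x.toNat+2)) % 2 = 1 then hd m n v x.toNat else 0)
        = 0 := by rw [if_neg (by omega)]
    have c2 : (if 1 ≤ x.toNat + 1 ∧ (x.toNat + 1 + (x.toNat+2)) % 2 = 1
        then hd m n v ((x.toNat+1 : ℕ) : ℤ) else 0) = hd m n v (x+1) := by
      rw [if_pos (by omega)]
      congr 1
      push_cast
      omega
    rw [c1, c2, add_zero]
    congr 1
    apply Finset.sum_congr rfl
    intro i hi
    have hiff : (1 ≤ i ∧ (i + (x.toNat+2)) % 2 = 1) ↔ (1 ≤ i ∧ (i + x.toNat) % 2 = 1) := by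
      omega
    simp only [hiff]
  · rcases eq_or_lt_of_le (by omega : x ≤ -1) with hx1 | hx1
    · subst hx1
      have e1 : Qd m n v (-1+2) = 0 := by
        unfold Qd
        rw [if_pos (by norm_num), show ((-1:ℤ)+2).toNat = 1 by rfl, Finset.sum_range_succ,
          Finset.sum_range_zero, if_neg (by omega)]
        simp
      have e2 : Qd m n v (-1) = hd m n v 0 := by
        unfold Qd
        rw [if_neg (by norm_num), show (-(-1:ℤ)).toNat = 1 by rfl, Finset.sum_range_succ,
          Finset.sum_range_zero, if_pos (by omega)]
        norm_num
      rw [e1, e2, show (-1:ℤ)+1 = 0 by ring]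
      exact (CharTwo.add_self_eq_zero _).symm
    · rcases eq_or_lt_of_le (by omega : x ≤ -2) with hx2 | hx2
      · subst hx2
        have e1 : Qd m n v (-2+2) = 0 := by
          unfold Qd
          rw [if_pos (by norm_num), show ((-2:ℤ)+2).toNat = 0 by norm_num,
            Finset.sum_range_zero]
        have e2 : Qd m n v (-2) = hd m n v (-1) := by
          unfold Qd
          rw [if_neg (by norm_num), show (-(-2:ℤ)).toNat = 2 by rfl, Finset.sum_range_succ,
            Finset.sum_range_succ, Finset.sum_range_zero, if_neg (by omega), if_pos (by omega)]
          norm_num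
        rw [e1, e2, show (-2:ℤ)+1 = -1 by ring]
        exact (CharTwo.add_self_eq_zero _).symm
      · -- x ≤ -3
        obtain ⟨j, hj⟩ : ∃ j : ℕ, (-x).toNat = j + 2 := ⟨(-(x+2)).toNat, by omega⟩
        have hj2 : (-(x+2)).toNat = j := by omega
        have key : Qd m n v x = Qd m n v (x+2) + hd m n v (x+1) := by
          unfold Qd
          rw [if_neg (by omega), if_neg (by omega), hj, hj2]
          rw [Finset.sum_range_succ, Finset.sum_range_succ]
          have c1 : (if (j + (j+2)) % 2 = 1 then hd m n v (-(j:ℤ)) else 0) = 0 := by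
            rw [if_neg (by omega)]
          have c2 : (if (j + 1 + (j+2)) % 2 = 1 then hd m n v (-((j+1 : ℕ) : ℤ)) else 0)
              = hd m n v (x+1) := by
            rw [if_pos (by omega)]
            congr 1
            push_cast
            omega
          rw [c1, c2, add_zero]
          congr 1
          apply Finset.sum_congr rfl
          intro i hi
          have hiff : ((i + (j+2)) % 2 = 1) ↔ ((i + j) % 2 = 1) := by omega
          simp only [hiff]
        rw [key]
        exact z2_addadd _ _


lemma sep (i j : ℤ) : wx m n v i j = Pd m n v (i+j) + Qd m n v (i-j) := by
  suffices H : ∀ j σ : ℤ, wx m n v (σ-j) j + Qd m n v (σ-2*j) = Pd m n v σ by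
    have h := H j (i+j)
    rw [show i+j-j = i by ring, show i+j-2*j = i-j by ring] at h
    exact z2_move h
  intro j
  induction j using Int.induction_on with
  | zero =>
    intro σ
    rw [show σ-(0:ℤ) = σ by ring, show σ-2*(0:ℤ) = σ by ring]
    rfl
  | succ k ih =>
    intro σ
    have e1 := u_diag hm hn hv (k:ℤ) (σ-k-1)
    rw [show σ-(k:ℤ)-1+1 = σ-k by ring, show σ-(k:ℤ)-1-k = σ-2*k-1 by ring] at e1
    have e2 := Qd_step hm hn (v := v) (σ-2*k-2)
    rw [show σ-2*(k:ℤ)-2+2 = σ-2*k by ring, show σ-2*(k:ℤ)-2+1 = σ-2*k-1 by ring] at e2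
    have e3 := ih σ
    rw [show σ-((k:ℤ)+1) = σ-k-1 by ring, show σ-2*((k:ℤ)+1) = σ-2*k-2 by ring]
    exact z2_comb e1 e2 e3
  | pred k ih =>
    intro σ
    have e1 := u_diag hm hn hv (-(k:ℤ)-1) (σ+k)
    rw [show σ+(k:ℤ)-(-(k:ℤ)-1) = σ+2*k+1 by ring, show -(k:ℤ)-1+1 = -(k:ℤ) by ring] at e1
    have e2 := Qd_step hm hn (v := v) (σ+2*k)
    rw [show σ+2*(k:ℤ)+2 = σ+2*k+2 by ring, show σ+2*(k:ℤ)+1 = σ+2*k+1 by ring] at e2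
    have e3 := ih σ
    rw [show σ-(-(k:ℤ)) = σ+k by ring, show σ-2*(-(k:ℤ)) = σ+2*k by ring] at e3
    rw [show σ-(-(k:ℤ)-1) = σ+k+1 by ring, show σ-2*(-(k:ℤ)-1) = σ+2*k+2 by ring]
    have e1' : wx m n v (σ+k) (-(k:ℤ)) + wx m n v (σ+k+1) (-(k:ℤ)-1) = hd m n v (σ+2*k+1) := by
      rw [add_comm]; exact e1
    exact z2_comb' e1' e2 e3

lemma QP (y : ℤ) : Qd m n v y = Pd m n v (y-2) := by
  have h := sep hm hn hv (y-1) (-1)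
  rw [show y-1+(-1) = y-2 by ring, show y-1-(-1) = y by ring, wz_bot hm hn hv] at h
  exact z2_zsum h

lemma sep2 (i j : ℤ) : wx m n v i j = Pd m n v (i+j) + Pd m n v (i-j-2) := by
  rw [sep hm hn hv, QP hm hn hv]

lemma Pd_reflect (x : ℤ) : Pd m n v (-4-x) = Pd m n v x := by
  have h := sep2 hm hn hv (-1) (x+1)
  rw [show (-1:ℤ)+(x+1) = x by ring, show (-1:ℤ)-(x+1)-2 = -4-x by ring,
    wz_left hm hn hv] at h
  exact z2_zsum h

lemma Pd_periodn (x : ℤ) : Pd m n v (x + 2*(n+1)) = Pd m n v x := by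
  have h := sep2 hm hn hv (x+n+2) n
  rw [show x+n+2+n = x+2*(n+1) by ring, show x+n+2-n-2 = x by ring, wz_top hm hn hv] at h
  exact (z2_zsum h).symm

lemma Pd_periodm (x : ℤ) : Pd m n v (x + 2*(m+1)) = Pd m n v x := by
  have h := sep2 hm hn hv m (x+m+2)
  rw [show m+(x+m+2) = x+2*(m+1) by ring, show m-(x+m+2)-2 = -4-x by ring,
    wz_right hm hn hv] at h
  have h2 := z2_zsum h
  rw [Pd_reflect hm hn hv] at h2
  exact h2.symm

lemma v_eq {i j : ℤ} (h : InGrid m n i j) : v i j = Pd m n v (i+j) + Pd m n v (i-j-2) := by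
  rw [← wx_grid hm hn hv h]
  exact sep2 hm hn hv i j

omit hv in
lemma hd_even (hodd : ∀ i j : ℤ, Odd (i+j) → v i j = 0) {d : ℤ} (hd2 : d % 2 = 0) :
    hd m n v d = 0 := by
  have p1 := foldI_parity (N := m+1) (d+1)
  have p2 := foldI_parity (N := m+1) d
  unfold hd wx
  rw [foldI_id (two_le_n1 hn) le_rfl (by omega), foldI_id (two_le_n1 hn) (by omega) (by omega)]
  rw [hodd _ _ (Int.odd_iff.mpr (by omega)), hodd _ _ (Int.odd_iff.mpr (by omega))]
  simp

omit hv in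
lemma hd_odd (hblack : ∀ i j : ℤ, Even (i+j) → v i j = 0) {d : ℤ} (hd2 : d % 2 = 1) :
    hd m n v d = 0 := by
  have p1 := foldI_parity (N := m+1) (d+1)
  have p2 := foldI_parity (N := m+1) d
  unfold hd wx
  rw [foldI_id (two_le_n1 hn) le_rfl (by omega), foldI_id (two_le_n1 hn) (by omega) (by omega)]
  rw [hblack _ _ (Int.even_iff.mpr (by omega)), hblack _ _ (Int.even_iff.mpr (by omega))]
  simp

omit hv in
lemma Pd_odd_vanish (hodd : ∀ i j : ℤ, Odd (i+j) → v i j = 0) {x : ℤ} (hx : x % 2 = 1) :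
    Pd m n v x = 0 := by
  have p1 := foldI_parity (N := m+1) x
  unfold Pd
  have w0 : wx m n v x 0 = 0 := by
    unfold wx
    rw [foldI_id (two_le_n1 hn) le_rfl (by omega)]
    exact hodd _ _ (Int.odd_iff.mpr (by omega))
  rw [w0, zero_add]
  unfold Qd
  split
  · apply Finset.sum_eq_zero
    intro i hi
    split_ifs with hcond
    · exact hd_even hm hn hodd (by omega)
    · rfl
  · apply Finset.sum_eq_zero
    intro i hi
    split_ifs with hcond
    · exact hd_even hm hn hodd (by omega)
    · rfl

omit hv in
lemma Pd_even_vanish (hblack : ∀ i j : ℤ, Even (i+j) → v i j = 0) {x : ℤ} (hx : x % 2 = 0) :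
    Pd m n v x = 0 := by
  have p1 := foldI_parity (N := m+1) x
  unfold Pd
  have w0 : wx m n v x 0 = 0 := by
    unfold wx
    rw [foldI_id (two_le_n1 hn) le_rfl (by omega)]
    exact hblack _ _ (Int.even_iff.mpr (by omega))
  rw [w0, zero_add]
  unfold Qd
  split
  · apply Finset.sum_eq_zero
    intro i hi
    split_ifs with hcond
    · exact hd_odd hm hn hblack (by omega)
    · rfl
  · apply Finset.sum_eq_zero
    intro i hi
    split_ifs with hcond
    · exact hd_odd hm hn hblack (by omega)
    · rfl


end harmext
end ext

/-! ### Explicit harmonic functions from admissible `P` -/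

section phi
variable (m n : ℤ)

def phiP (P : ℤ → ZMod 2) : ℤ → ℤ → ZMod 2 :=
  fun i j => if InGrid m n i j then P (i+j) + P (i-j-2) else 0

variable {m n}
variable {P : ℤ → ZMod 2}
variable (hm : 2 ≤ m) (hn : 2 ≤ n)
variable (h1 : ∀ x, P (x + 2*(m+1)) = P x) (h2 : ∀ x, P (x + 2*(n+1)) = P x)
    (h3 : ∀ x, P (-4-x) = P x)

lemma z2_four2 (A B C D : ZMod 2) : (A+B)+(C+D)+(A+D)+(C+B) = 0 := by revert A B C D; decide

include h1 h2 h3 in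
lemma phiP_eval {i' j' : ℤ} (hb1 : -1 ≤ i') (hb2 : i' ≤ m) (hb3 : -1 ≤ j') (hb4 : j' ≤ n) :
    phiP m n P i' j' = P (i'+j') + P (i'-j'-2) := by
  by_cases hin : InGrid m n i' j'
  · simp [phiP, hin]
  · have hcase : i' = -1 ∨ i' = m ∨ j' = -1 ∨ j' = n := by
      simp only [InGrid] at hin; omega
    simp only [phiP, if_neg hin]
    rcases hcase with h | h | h | h
    · subst h
      rw [show (-1:ℤ)+j' = j'-1 by ring, show (-1:ℤ)-j'-2 = -4-(j'-1) by ring, h3]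
      exact (CharTwo.add_self_eq_zero _).symm
    · rw [h, show m-j'-2 = -4-(j'-m-2) by ring, h3 (j'-m-2),
        show m+j' = (j'-m-2) + 2*(m+1) by ring, h1]
      exact (CharTwo.add_self_eq_zero _).symm
    · subst h
      rw [show i'+(-1) = i'-(-1)-2 by ring]
      exact (CharTwo.add_self_eq_zero _).symm
    · rw [h, show i'+n = (i'-n-2) + 2*(n+1) by ring, h2]
      exact (CharTwo.add_self_eq_zero _).symm

include h1 h2 h3 in
lemma phiP_mem_harm : phiP m n P ∈ harm m n := by
  refine ⟨fun i j h => by simp [phiP, h], fun i j hij => ?_⟩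
  obtain ⟨g1, g2, g3, g4⟩ := hij
  rw [phiP_eval h1 h2 h3 (by omega) (by omega) (by omega) (by omega),
      phiP_eval h1 h2 h3 (by omega) (by omega) (by omega) (by omega),
      phiP_eval h1 h2 h3 (by omega) (by omega) (by omega) (by omega),
      phiP_eval h1 h2 h3 (by omega) (by omega) (by omega) (by omega)]
  rw [show i-1+j = (i+j)-1 by ring, show i-1-j-2 = (i-j-2)-1 by ring,
      show i+1+j = (i+j)+1 by ring, show i+1-j-2 = (i-j-2)+1 by ring,
      show i+(j-1) = (i+j)-1 by ring, show i-(j-1)-2 = (i-j-2)+1 by ring,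
      show i+(j+1) = (i+j)+1 by ring, show i-(j+1)-2 = (i-j-2)-1 by ring]
  exact z2_four2 (P ((i+j)-1)) (P ((i-j-2)-1)) (P ((i+j)+1)) (P ((i-j-2)+1))

include h1 h2 h3 in
lemma phiP_mem_BW (h4 : ∀ x : ℤ, x % 2 = 1 → P x = 0) : phiP m n P ∈ kerBW m n := by
  refine Submodule.mem_inf.mpr ⟨phiP_mem_harm h1 h2 h3, ?_⟩
  intro i j hodd
  have hx := Int.odd_iff.mp hodd
  simp only [phiP]
  split
  · rw [h4 _ (by omega), h4 _ (by omega), add_zero]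
  · rfl

include h1 h2 h3 in
lemma phiP_mem_WB (h4 : ∀ x : ℤ, x % 2 = 0 → P x = 0) : phiP m n P ∈ kerWB m n := by
  refine Submodule.mem_inf.mpr ⟨phiP_mem_harm h1 h2 h3, ?_⟩
  intro i j heven
  have hx := Int.even_iff.mp heven
  simp only [phiP]
  split
  · rw [h4 _ (by omega), h4 _ (by omega), add_zero]
  · rfl


end phi

/-! ### The space of admissible `P` and its cardinality -/

section count

def Gg (m n : ℤ) : ℤ := (Int.gcd (m+1) (n+1) : ℤ)

/-- Admissible `P` supported on residues `≡ e (mod 2)`, normalised at `e-2`. -/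
def SGen (m n e : ℤ) : Set (ℤ → ZMod 2) :=
  {P | (∀ x, P (x + 2*(m+1)) = P x) ∧ (∀ x, P (x + 2*(n+1)) = P x) ∧
    (∀ x, P (-4-x) = P x) ∧ (∀ x : ℤ, x % 2 ≠ e → P x = 0) ∧ P (e-2) = 0}

def fex {κ : ℕ} (f : Fin κ → ZMod 2) (k : ℕ) : ZMod 2 := if h : k < κ then f ⟨k, h⟩ else 0

def extend (m n e : ℤ) {κ : ℕ} (f : Fin κ → ZMod 2) : ℤ → ZMod 2 := fun x =>
  if (x % (2*Gg m n)) % 2 = e ∧ x % (2*Gg m n) ≤ Gg m n - 2 then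
    fex f ((x % (2*Gg m n)).toNat / 2)
  else if (x % (2*Gg m n)) % 2 = e ∧ 0 ≤ 2*Gg m n - 4 - x % (2*Gg m n) ∧
      2*Gg m n - 4 - x % (2*Gg m n) ≤ Gg m n - 2 then
    fex f ((2*Gg m n - 4 - x % (2*Gg m n)).toNat / 2)
  else 0

variable {m n : ℤ} (hm : 2 ≤ m) (hn : 2 ≤ n)

include hm hn

lemma Gg_pos : 0 < Gg m n := by
  have : Int.gcd (m+1) (n+1) ≠ 0 := by
    simp only [ne_eq, Int.gcd_eq_zero_iff]
    intro ⟨h1, _⟩; omega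
  unfold Gg; exact_mod_cast Nat.pos_of_ne_zero this

lemma Gg_dvd_m : Gg m n ∣ m + 1 := Int.gcd_dvd_left (m+1) (n+1)
lemma Gg_dvd_n : Gg m n ∣ n + 1 := Int.gcd_dvd_right (m+1) (n+1)

lemma Gg_le_m : Gg m n ≤ m + 1 := Int.le_of_dvd (by omega) (Gg_dvd_m hm hn)
lemma Gg_le_n : Gg m n ≤ n + 1 := Int.le_of_dvd (by omega) (Gg_dvd_n hm hn)

lemma per_mul {P : ℤ → ZMod 2} {T : ℤ} (h : ∀ x, P (x+T) = P x) :
    ∀ (k : ℤ) (x : ℤ), P (x + k*T) = P x := by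
  intro k
  induction k using Int.induction_on with
  | zero => simp
  | succ k ih => intro x; rw [show x + ((k:ℤ)+1)*T = (x + k*T) + T by ring, h, ih]
  | pred k ih =>
    intro x
    have h2 := h (x + (-(k:ℤ)-1)*T)
    rw [show x + (-(k:ℤ)-1)*T + T = x + (-(k:ℤ))*T by ring] at h2
    rw [← h2]; exact ih x

lemma SGen_period2G {P : ℤ → ZMod 2} {e : ℤ} (hP : P ∈ SGen m n e) (x : ℤ) :
    P (x + 2 * Gg m n) = P x := by
  obtain ⟨p1, p2, p3, p4, p5⟩ := hP
  have hab := Int.gcd_eq_gcd_ab (m+1) (n+1)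
  have key : x + 2 * Gg m n
      = (x + (Int.gcdB (m+1) (n+1)) * (2*(n+1))) + (Int.gcdA (m+1) (n+1)) * (2*(m+1)) := by
    unfold Gg; rw [hab]; ring
  rw [key, per_mul hm hn p1, per_mul hm hn p2]

lemma SGen_emod {P : ℤ → ZMod 2} {e : ℤ} (hP : P ∈ SGen m n e) (x : ℤ) :
    P x = P (x % (2 * Gg m n)) := by
  have hG := Gg_pos hm hn
  have h := Int.emod_add_mul_ediv x (2 * Gg m n)
  conv_lhs => rw [← h]
  rw [show x % (2*Gg m n) + 2*Gg m n * (x / (2*Gg m n))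
      = x % (2*Gg m n) + (x / (2*Gg m n)) * (2 * Gg m n) by ring]
  exact per_mul hm hn (fun y => SGen_period2G hm hn hP y) _ _

lemma SGen_sentinel {P : ℤ → ZMod 2} {e : ℤ} (he : e = 0 ∨ e = 1) (hP : P ∈ SGen m n e) :
    P (-1) = 0 ∧ P (-2) = 0 ∧ P (-3) = 0 := by
  obtain ⟨p1, p2, p3, p4, p5⟩ := hP
  rcases he with he | he <;> subst he
  · exact ⟨p4 _ (by norm_num), by simpa using p5, p4 _ (by norm_num)⟩
  · refine ⟨by simpa using p5, p4 _ (by norm_num), ?_⟩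
    have := p3 (-1)
    rw [show (-4:ℤ) - (-1) = -3 by ring] at this
    rw [this]; simpa using p5

-- the residue of the reflected point
lemma emod_refl_formula (hG2 : 2 ≤ Gg m n) (x : ℤ) :
    (-4-x) % (2*Gg m n) = (if x % (2*Gg m n) ≤ 2*Gg m n - 4
      then 2*Gg m n - 4 - x % (2*Gg m n) else 4*Gg m n - 4 - x % (2*Gg m n)) := by
  set G := Gg m n with hGdef
  have h0 : 0 ≤ x % (2*G) := Int.emod_nonneg x (by omega)
  have h1 : x % (2*G) < 2*G := Int.emod_lt_of_pos x (by omega)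
  have e1 : (-4-x) % (2*G) = (-4 - x % (2*G)) % (2*G) := by
    conv_lhs => rw [Int.sub_emod]
    conv_rhs => rw [Int.sub_emod]
    rw [Int.emod_emod_of_dvd x (dvd_refl (2*G))]
  have e2 : (-4 - x % (2*G)) % (2*G) = (2*G - 4 - x % (2*G)) % (2*G) := by
    rw [show -4 - x % (2*G) = (2*G - 4 - x % (2*G)) + (2*G)*(-1) by ring,
      Int.add_mul_emod_self_left]
  rw [e1, e2]
  split
  · exact Int.emod_eq_of_lt (by omega) (by omega)
  · rw [show 2*G - 4 - x % (2*G) = (4*G - 4 - x % (2*G)) + (2*G)*(-1) by ring,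
      Int.add_mul_emod_self_left]
    exact Int.emod_eq_of_lt (by omega) (by omega)

lemma emod_per_m (x : ℤ) : (x + 2*(m+1)) % (2*Gg m n) = x % (2*Gg m n) := by
  obtain ⟨t, ht⟩ := Gg_dvd_m hm hn
  rw [show x + 2*(m+1) = x + (2*Gg m n)*t by rw [ht]; ring, Int.add_mul_emod_self_left]

lemma emod_per_n (x : ℤ) : (x + 2*(n+1)) % (2*Gg m n) = x % (2*Gg m n) := by
  obtain ⟨t, ht⟩ := Gg_dvd_n hm hn
  rw [show x + 2*(n+1) = x + (2*Gg m n)*t by rw [ht]; ring, Int.add_mul_emod_self_left]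

variable {e : ℤ} (he : e = 0 ∨ e = 1) {κ : ℕ}
include he

lemma extend_mem (f : Fin κ → ZMod 2) : extend m n e f ∈ SGen m n e := by
  have hG := Gg_pos hm hn
  set G := Gg m n with hGdef
  refine ⟨fun x => ?_, fun x => ?_, fun x => ?_, fun x hx => ?_, ?_⟩
  · unfold extend; rw [emod_per_m hm hn]
  · unfold extend; rw [emod_per_n hm hn]
  · -- reflection
    rcases eq_or_lt_of_le (show (1:ℤ) ≤ G by omega) with hG1 | hG2
    · -- G = 1 : all branches are off
      have c1 : ∀ y : ℤ, ¬ (y % (2*G) % 2 = e ∧ y % (2*G) ≤ G - 2) := by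
        intro y hc
        have := Int.emod_nonneg y (by omega : 2*G ≠ 0)
        omega
      have c2 : ∀ y : ℤ, ¬ (y % (2*G) % 2 = e ∧ 0 ≤ 2*G - 4 - y % (2*G) ∧
          2*G - 4 - y % (2*G) ≤ G - 2) := by
        intro y hc
        have := Int.emod_nonneg y (by omega : 2*G ≠ 0)
        omega
      unfold extend
      rw [if_neg (c1 _), if_neg (c2 _), if_neg (c1 _), if_neg (c2 _)]
    · have h0 : 0 ≤ x % (2*G) := Int.emod_nonneg x (by omega)
      have h1 : x % (2*G) < 2*G := Int.emod_lt_of_pos x (by omega)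
      have hr := emod_refl_formula hm hn (by omega) x
      rw [← hGdef] at hr
      unfold extend
      rw [← hGdef, hr]
      by_cases hA : x % (2*G) ≤ 2*G - 4
      · rw [if_pos hA]
        set r := x % (2*G) with hrdef
        have hpar : (2*G - 4 - r) % 2 = r % 2 := by omega
        by_cases hB : r % 2 = e ∧ r ≤ G - 2
        · by_cases hC : r = G - 2
          · rw [if_pos (by omega : (2*G-4-r) % 2 = e ∧ 2*G-4-r ≤ G-2), if_pos hB]
            congr 2
            omega
          · rw [if_neg (by omega : ¬ ((2*G-4-r) % 2 = e ∧ 2*G-4-r ≤ G-2)),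
              if_pos (by omega : (2*G-4-r) % 2 = e ∧ 0 ≤ 2*G-4-(2*G-4-r) ∧
                2*G-4-(2*G-4-r) ≤ G-2), if_pos hB]
            congr 2
            omega
        · by_cases hD : r % 2 = e ∧ 0 ≤ 2*G-4-r ∧ 2*G-4-r ≤ G-2
          · rw [if_pos (by omega : (2*G-4-r) % 2 = e ∧ 2*G-4-r ≤ G-2), if_neg hB, if_pos hD]
          · -- here the parity must fail
            have hpar2 : ¬ (r % 2 = e) := by omega
            rw [if_neg (by omega : ¬ ((2*G-4-r) % 2 = e ∧ 2*G-4-r ≤ G-2)),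
              if_neg (by omega : ¬ ((2*G-4-r) % 2 = e ∧ 0 ≤ 2*G-4-(2*G-4-r) ∧
                2*G-4-(2*G-4-r) ≤ G-2)), if_neg hB, if_neg hD]
      · -- sentinel band
        rw [if_neg hA]
        set r := x % (2*G) with hrdef
        rw [if_neg (by omega : ¬ ((4*G-4-r) % 2 = e ∧ 4*G-4-r ≤ G-2)),
          if_neg (by omega : ¬ ((4*G-4-r) % 2 = e ∧ 0 ≤ 2*G-4-(4*G-4-r) ∧
            2*G-4-(4*G-4-r) ≤ G-2)),
          if_neg (by omega : ¬ (r % 2 = e ∧ r ≤ G-2)),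
          if_neg (by omega : ¬ (r % 2 = e ∧ 0 ≤ 2*G-4-r ∧ 2*G-4-r ≤ G-2))]
  · -- parity vanishing
    have hpar : x % (2*G) % 2 = x % 2 := Int.emod_emod_of_dvd x ⟨G, by ring⟩
    unfold extend
    rw [← hGdef]
    rw [if_neg (by omega), if_neg (by omega)]
  · -- normalisation at e-2
    have h0 : 0 ≤ (e-2) % (2*G) := Int.emod_nonneg _ (by omega)
    have h1 : (e-2) % (2*G) < 2*G := Int.emod_lt_of_pos _ (by omega)
    have hval : (e-2) % (2*G) = e - 2 + 2*G := by
      conv_lhs => rw [show e - 2 = (e - 2 + 2*G) + (2*G)*(-1) by ring]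
      rw [Int.add_mul_emod_self_left]
      exact Int.emod_eq_of_lt (by omega) (by omega)
    unfold extend
    rw [← hGdef]
    rw [if_neg (by omega), if_neg (by omega)]


lemma restrict_extend (hκ1 : ∀ t : ℕ, t < κ → 2*(t:ℤ) + e ≤ Gg m n - 2)
    (f : Fin κ → ZMod 2) (t : Fin κ) : extend m n e f (2*(t:ℤ)+e) = f t := by
  have hG := Gg_pos hm hn
  have hb := hκ1 t t.2
  have hrr : (2*(t:ℤ)+e) % (2*Gg m n) = 2*(t:ℤ)+e :=
    Int.emod_eq_of_lt (by omega) (by omega)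
  unfold extend
  rw [hrr, if_pos (by omega : (2*(t:ℤ)+e) % 2 = e ∧ 2*(t:ℤ)+e ≤ Gg m n - 2)]
  have hidx : ((2*(t:ℤ)+e).toNat / 2) = (t:ℕ) := by omega
  rw [hidx]
  unfold fex
  rw [dif_pos t.2]

lemma extend_restrict (hκ2 : ∀ r : ℤ, 0 ≤ r → r ≤ Gg m n - 2 → r % 2 = e → r.toNat / 2 < κ)
    {P : ℤ → ZMod 2} (hP : P ∈ SGen m n e) :
    extend m n e (fun t : Fin κ => P (2*(t:ℤ)+e)) = P := by
  funext x
  have hG := Gg_pos hm hn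
  have h0 : 0 ≤ x % (2*Gg m n) := Int.emod_nonneg x (by omega)
  have h1 : x % (2*Gg m n) < 2*Gg m n := Int.emod_lt_of_pos x (by omega)
  have hPx : P x = P (x % (2*Gg m n)) := SGen_emod hm hn hP x
  obtain ⟨p1, p2, p3, p4, p5⟩ := hP
  have hsent := SGen_sentinel hm hn he ⟨p1, p2, p3, p4, p5⟩
  unfold extend
  by_cases hA : (x % (2*Gg m n)) % 2 = e ∧ x % (2*Gg m n) ≤ Gg m n - 2
  · rw [if_pos hA]
    unfold fex
    rw [dif_pos (hκ2 _ h0 hA.2 hA.1)]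
    show P (2*((((x % (2*Gg m n)).toNat / 2 : ℕ)) : ℤ) + e) = _
    rw [hPx]
    exact congrArg P (by omega)
  · rw [if_neg hA]
    by_cases hB : (x % (2*Gg m n)) % 2 = e ∧ 0 ≤ 2*Gg m n - 4 - x % (2*Gg m n) ∧
        2*Gg m n - 4 - x % (2*Gg m n) ≤ Gg m n - 2
    · rw [if_pos hB]
      unfold fex
      rw [dif_pos (hκ2 _ hB.2.1 hB.2.2 (by omega))]
      show P (2*(((2*Gg m n - 4 - x % (2*Gg m n)).toNat / 2 : ℕ) : ℤ) + e) = _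
      have harg : 2*(((2*Gg m n - 4 - x % (2*Gg m n)).toNat / 2 : ℕ) : ℤ) + e
          = 2*Gg m n - 4 - x % (2*Gg m n) := by omega
      rw [harg, show 2*Gg m n - 4 - x % (2*Gg m n) = (-4 - x % (2*Gg m n)) + 2*Gg m n by ring,
        SGen_period2G hm hn ⟨p1, p2, p3, p4, p5⟩, p3, ← hPx]
    · rw [if_neg hB]
      rw [hPx]
      by_cases hpar : (x % (2*Gg m n)) % 2 = e
      · have hr3 : x % (2*Gg m n) = 2*Gg m n - 3 ∨ x % (2*Gg m n) = 2*Gg m n - 2 ∨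
            x % (2*Gg m n) = 2*Gg m n - 1 := by omega
        rcases hr3 with h | h | h <;> rw [h]
        · rw [show 2*Gg m n - 3 = -3 + 2*Gg m n by ring,
            SGen_period2G hm hn ⟨p1, p2, p3, p4, p5⟩, hsent.2.2]
        · rw [show 2*Gg m n - 2 = -2 + 2*Gg m n by ring,
            SGen_period2G hm hn ⟨p1, p2, p3, p4, p5⟩, hsent.2.1]
        · rw [show 2*Gg m n - 1 = -1 + 2*Gg m n by ring,
            SGen_period2G hm hn ⟨p1, p2, p3, p4, p5⟩, hsent.1]
      · exact (p4 _ hpar).symm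

noncomputable def SGen_equiv (hκ1 : ∀ t : ℕ, t < κ → 2*(t:ℤ) + e ≤ Gg m n - 2)
    (hκ2 : ∀ r : ℤ, 0 ≤ r → r ≤ Gg m n - 2 → r % 2 = e → r.toNat / 2 < κ) :
    SGen m n e ≃ (Fin κ → ZMod 2) where
  toFun := fun P => fun t => P.1 (2*(t:ℤ)+e)
  invFun := fun f => ⟨extend m n e f, extend_mem hm hn he f⟩
  left_inv := fun P => Subtype.ext (extend_restrict hm hn he hκ2 P.2)
  right_inv := fun f => funext fun t => restrict_extend hm hn he hκ1 f t

lemma SGen_finite (hκ1 : ∀ t : ℕ, t < κ → 2*(t:ℤ) + e ≤ Gg m n - 2)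
    (hκ2 : ∀ r : ℤ, 0 ≤ r → r ≤ Gg m n - 2 → r % 2 = e → r.toNat / 2 < κ) :
    (SGen m n e).Finite := by
  have := Finite.of_equiv _ (SGen_equiv hm hn he hκ1 hκ2).symm
  exact Set.finite_coe_iff.mp this

lemma SGen_card (hκ1 : ∀ t : ℕ, t < κ → 2*(t:ℤ) + e ≤ Gg m n - 2)
    (hκ2 : ∀ r : ℤ, 0 ≤ r → r ≤ Gg m n - 2 → r % 2 = e → r.toNat / 2 < κ) :
    (SGen m n e).ncard = 2^κ := by
  rw [← Nat.card_coe_set_eq, Nat.card_congr (SGen_equiv hm hn he hκ1 hκ2)]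
  simp [Nat.card_eq_fintype_card]


lemma extend_congr (f f' : Fin κ → ZMod 2)
    (h : ∀ t : Fin κ, 2*(t:ℤ)+e ≤ Gg m n - 2 → f t = f' t) :
    extend m n e f = extend m n e f' := by
  funext x
  have hG := Gg_pos hm hn
  have h0 : 0 ≤ x % (2*Gg m n) := Int.emod_nonneg x (by omega)
  unfold extend
  split
  · next hc =>
    unfold fex
    by_cases hk : (x % (2*Gg m n)).toNat / 2 < κ
    · rw [dif_pos hk, dif_pos hk]
      exact h ⟨_, hk⟩
        (show 2*((((x % (2*Gg m n)).toNat / 2 : ℕ)) : ℤ)+e ≤ Gg m n - 2 by omega)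
    · rw [dif_neg hk, dif_neg hk]
  · split
    · next hc =>
      unfold fex
      by_cases hk : (2*Gg m n - 4 - x % (2*Gg m n)).toNat / 2 < κ
      · rw [dif_pos hk, dif_pos hk]
        exact h ⟨_, hk⟩
          (show 2*((((2*Gg m n - 4 - x % (2*Gg m n)).toNat / 2 : ℕ)) : ℤ)+e ≤ Gg m n - 2
            by omega)
      · rw [dif_neg hk, dif_neg hk]
    · rfl

lemma phiP_injOn : Set.InjOn (phiP m n) (SGen m n e) := by
  intro P hP P' hP' heq
  have hG := Gg_pos hm hn
  have hGm := Gg_le_m hm hn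
  have hGn := Gg_le_n hm hn
  have hsP := SGen_sentinel hm hn he hP
  have hsP' := SGen_sentinel hm hn he hP'
  have hrep : ∀ r : ℤ, 0 ≤ r → r ≤ Gg m n - 2 → r % 2 = e → P r = P' r := by
    intro r h1 h2 h3
    rcases he with he0 | he0 <;> subst he0
    · have hgrid : InGrid m n (r/2) (r/2) := by simp only [InGrid]; omega
      have hh := congrFun (congrFun heq (r/2)) (r/2)
      simp only [phiP, if_pos hgrid] at hh
      rw [show r/2 + r/2 = r by omega, show r/2 - r/2 - 2 = -2 by ring,
        hsP.2.1, hsP'.2.1, add_zero, add_zero] at hh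
      exact hh
    · have hgrid : InGrid m n (r/2+1) (r/2) := by simp only [InGrid]; omega
      have hh := congrFun (congrFun heq (r/2+1)) (r/2)
      simp only [phiP, if_pos hgrid] at hh
      rw [show r/2+1 + r/2 = r by omega, show r/2+1 - (r/2) - 2 = -1 by ring,
        hsP.1, hsP'.1, add_zero, add_zero] at hh
      exact hh
  set κ0 := (Gg m n).toNat with hκ0
  have hκ2 : ∀ r : ℤ, 0 ≤ r → r ≤ Gg m n - 2 → r % 2 = e → r.toNat / 2 < κ0 := by
    intro r h1 h2 h3; omega
  have e1 := extend_restrict (κ := κ0) hm hn he hκ2 hP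
  have e2 := extend_restrict (κ := κ0) hm hn he hκ2 hP'
  rw [← e1, ← e2]
  exact extend_congr hm hn he _ _ (fun t ht => hrep _ (by omega) ht (by omega))

omit hm hn he in
lemma z2_cc (a b c : ZMod 2) : (a+c)+(b+c) = a+b := by revert a b c; decide

omit he in
lemma kerBW_eq : (kerBW m n : Set (ℤ → ℤ → ZMod 2)) = phiP m n '' SGen m n 0 := by
  ext v
  constructor
  · intro hv
    obtain ⟨hvh, hvo⟩ := Submodule.mem_inf.mp hv
    have hharm : IsHarmonic m n v := hvh
    have hodd : ∀ i j : ℤ, Odd (i+j) → v i j = 0 := hvo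
    have hPb : ∀ x : ℤ,
        (fun x => if x % 2 = 0 then Pd m n v x + Pd m n v (-2) else 0) x
        = if x % 2 = 0 then Pd m n v x + Pd m n v (-2) else 0 := fun _ => rfl
    refine ⟨fun x => if x % 2 = 0 then Pd m n v x + Pd m n v (-2) else 0,
      ⟨?_, ?_, ?_, ?_, ?_⟩, ?_⟩ <;> (try simp only [hPb])
    · intro x
      by_cases hp : x % 2 = 0
      · rw [if_pos (by omega), if_pos hp, Pd_periodm hm hn hharm]
      · rw [if_neg (by omega), if_neg hp]
    · intro x
      by_cases hp : x % 2 = 0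
      · rw [if_pos (by omega), if_pos hp, Pd_periodn hm hn hharm]
      · rw [if_neg (by omega), if_neg hp]
    · intro x
      by_cases hp : x % 2 = 0
      · rw [if_pos (by omega), if_pos hp, Pd_reflect hm hn hharm]
      · rw [if_neg (by omega), if_neg hp]
    · intro x hx
      rw [if_neg hx]
    · rw [if_pos (by norm_num), show (0:ℤ)-2 = -2 by ring, CharTwo.add_self_eq_zero]
    · funext i j
      by_cases hin : InGrid m n i j
      · simp only [phiP, if_pos hin]
        by_cases hpar : (i+j) % 2 = 0
        · rw [if_pos hpar, if_pos (by omega : (i-j-2) % 2 = 0),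
            v_eq hm hn hharm hin]
          exact z2_cc _ _ _
        · rw [if_neg hpar, if_neg (by omega : ¬ ((i-j-2) % 2 = 0)),
            hodd i j (Int.odd_iff.mpr (by omega))]
          simp
      · simp only [phiP, if_neg hin]
        exact (hharm.1 i j hin).symm
  · rintro ⟨P, hP, rfl⟩
    exact phiP_mem_BW hP.1 hP.2.1 hP.2.2.1 (fun x hx => hP.2.2.2.1 x (by omega))

omit he in
lemma kerWB_eq : (kerWB m n : Set (ℤ → ℤ → ZMod 2)) = phiP m n '' SGen m n 1 := by
  ext v
  constructor
  · intro hv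
    obtain ⟨hvh, hvo⟩ := Submodule.mem_inf.mp hv
    have hharm : IsHarmonic m n v := hvh
    have hevn : ∀ i j : ℤ, Even (i+j) → v i j = 0 := hvo
    have hPb : ∀ x : ℤ,
        (fun x => if x % 2 = 1 then Pd m n v x + Pd m n v (-1) else 0) x
        = if x % 2 = 1 then Pd m n v x + Pd m n v (-1) else 0 := fun _ => rfl
    refine ⟨fun x => if x % 2 = 1 then Pd m n v x + Pd m n v (-1) else 0,
      ⟨?_, ?_, ?_, ?_, ?_⟩, ?_⟩ <;> (try simp only [hPb])
    · intro x
      by_cases hp : x % 2 = 1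
      · rw [if_pos (by omega), if_pos hp, Pd_periodm hm hn hharm]
      · rw [if_neg (by omega), if_neg hp]
    · intro x
      by_cases hp : x % 2 = 1
      · rw [if_pos (by omega), if_pos hp, Pd_periodn hm hn hharm]
      · rw [if_neg (by omega), if_neg hp]
    · intro x
      by_cases hp : x % 2 = 1
      · rw [if_pos (by omega), if_pos hp, Pd_reflect hm hn hharm]
      · rw [if_neg (by omega), if_neg hp]
    · intro x hx
      rw [if_neg hx]
    · rw [if_pos (by norm_num), show (1:ℤ)-2 = -1 by ring, CharTwo.add_self_eq_zero]
    · funext i j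
      by_cases hin : InGrid m n i j
      · simp only [phiP, if_pos hin]
        by_cases hpar : (i+j) % 2 = 1
        · rw [if_pos hpar, if_pos (by omega : (i-j-2) % 2 = 1),
            v_eq hm hn hharm hin]
          exact z2_cc _ _ _
        · rw [if_neg hpar, if_neg (by omega : ¬ ((i-j-2) % 2 = 1)),
            hevn i j (Int.even_iff.mpr (by omega))]
          simp
      · simp only [phiP, if_neg hin]
        exact (hharm.1 i j hin).symm
  · rintro ⟨P, hP, rfl⟩
    exact phiP_mem_WB hP.1 hP.2.1 hP.2.2.1 (fun x hx => hP.2.2.2.1 x (by omega))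

end count
end CNP

/-- the number of nonzero polarized harmonic functions equals
2^β + 2^ω − 2. -/
theorem count_nonzero_polarized (m n : ℤ) (hm : 2 ≤ m) (hn : 2 ≤ n)
    (c β ω : ℕ) (hc : c = Int.gcd (m + 1) (n + 1) - 1)
    (hβ : 2 * β = c + c % 2) (hω : 2 * ω = c - c % 2) :
    (((kerBW m n : Set (ℤ → ℤ → ZMod 2)) \ {0}) ∪
      ((kerWB m n : Set (ℤ → ℤ → ZMod 2)) \ {0})).ncard = 2 ^ β + 2 ^ ω - 2 := by
  classical
  have hgG : CNP.Gg m n = (Int.gcd (m+1) (n+1) : ℤ) := rfl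
  have hg1 : 1 ≤ Int.gcd (m+1) (n+1) := by
    have : Int.gcd (m+1) (n+1) ≠ 0 := by
      simp only [ne_eq, Int.gcd_eq_zero_iff]
      intro ⟨h1, _⟩; omega
    omega
  -- the κ-hypotheses for e = 0, κ = β
  have hκ1B : ∀ t : ℕ, t < β → 2*(t:ℤ) + 0 ≤ CNP.Gg m n - 2 := by
    intro t ht; rw [hgG]; omega
  have hκ2B : ∀ r : ℤ, 0 ≤ r → r ≤ CNP.Gg m n - 2 → r % 2 = 0 → r.toNat / 2 < β := by
    intro r h1 h2 h3; rw [hgG] at h2; omega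
  have hκ1W : ∀ t : ℕ, t < ω → 2*(t:ℤ) + 1 ≤ CNP.Gg m n - 2 := by
    intro t ht; rw [hgG]; omega
  have hκ2W : ∀ r : ℤ, 0 ≤ r → r ≤ CNP.Gg m n - 2 → r % 2 = 1 → r.toNat / 2 < ω := by
    intro r h1 h2 h3; rw [hgG] at h2; omega
  have he0 : (0:ℤ) = 0 ∨ (0:ℤ) = 1 := Or.inl rfl
  have he1 : (1:ℤ) = 0 ∨ (1:ℤ) = 1 := Or.inr rfl
  have hBW := CNP.kerBW_eq hm hn (m := m) (n := n)
  have hWB := CNP.kerWB_eq hm hn (m := m) (n := n)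
  have hfinB : ((kerBW m n : Set (ℤ → ℤ → ZMod 2))).Finite := by
    rw [hBW]; exact (CNP.SGen_finite hm hn he0 hκ1B hκ2B).image _
  have hfinW : ((kerWB m n : Set (ℤ → ℤ → ZMod 2))).Finite := by
    rw [hWB]; exact (CNP.SGen_finite hm hn he1 hκ1W hκ2W).image _
  have hcardB : ((kerBW m n : Set (ℤ → ℤ → ZMod 2))).ncard = 2^β := by
    rw [hBW, Set.ncard_image_of_injOn (CNP.phiP_injOn hm hn he0)]
    exact CNP.SGen_card hm hn he0 hκ1B hκ2B
  have hcardW : ((kerWB m n : Set (ℤ → ℤ → ZMod 2))).ncard = 2^ω := by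
    rw [hWB, Set.ncard_image_of_injOn (CNP.phiP_injOn hm hn he1)]
    exact CNP.SGen_card hm hn he1 hκ1W hκ2W
  -- disjointness
  have hdisj : Disjoint ((kerBW m n : Set (ℤ → ℤ → ZMod 2)) \ {0})
      ((kerWB m n : Set (ℤ → ℤ → ZMod 2)) \ {0}) := by
    rw [Set.disjoint_left]
    rintro v ⟨hv1, hv2⟩ ⟨hw1, hw2⟩
    apply hv2
    have ho : ∀ i j : ℤ, Odd (i+j) → v i j = 0 := (Submodule.mem_inf.mp hv1).2
    have hev : ∀ i j : ℤ, Even (i+j) → v i j = 0 := (Submodule.mem_inf.mp hw1).2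
    have : v = 0 := by
      funext i j
      rcases Int.even_or_odd (i+j) with h | h
      · exact hev i j h
      · exact ho i j h
    simp [this]
  have h0B : (0 : ℤ → ℤ → ZMod 2) ∈ (kerBW m n : Set (ℤ → ℤ → ZMod 2)) :=
    (kerBW m n).zero_mem
  have h0W : (0 : ℤ → ℤ → ZMod 2) ∈ (kerWB m n : Set (ℤ → ℤ → ZMod 2)) :=
    (kerWB m n).zero_mem
  rw [Set.ncard_union_eq hdisj (hfinB.diff) (hfinW.diff),
    Set.ncard_diff_singleton_of_mem h0B, Set.ncard_diff_singleton_of_mem h0W,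
    hcardB, hcardW]
  have e1 : 1 ≤ 2^β := Nat.one_le_two_pow
  have e2 : 1 ≤ 2^ω := Nat.one_le_two_pow
  omega
end

section
/- (Proposition 3(i), diagonal symmetry.) Let m ≥ n ≥ 2 and let v be a harmonic function on the m×n rectangular grid. Then for all i, j with 0 ≤ i, j ≤ n−1 one has v(i,j) = v(j,i). -/
namespace DiagSym

def inR (n j : ℤ) : Prop := 0 ≤ j ∧ j ≤ n - 1

instance (n j : ℤ) : Decidable (inR n j) := inferInstanceAs (Decidable (_ ∧ _))

/-- Truncated shift operator. -/
def Tn (n : ℤ) (f : ℤ → ZMod 2) : ℤ → ZMod 2 :=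
  fun j => if inR n j then f (j-1) + f (j+1) else 0

/-- Chebyshev-like polynomials of `Tn`. -/
def Pp (n : ℤ) : ℕ → (ℤ → ZMod 2) → ℤ → ZMod 2
  | 0 => fun f => f
  | 1 => Tn n
  | (k+2) => fun f j => Tn n (Pp n (k+1) f) j + Pp n k f j

lemma Pp_zero (n : ℤ) (f : ℤ → ZMod 2) : Pp n 0 f = f := rfl
lemma Pp_one (n : ℤ) (f : ℤ → ZMod 2) : Pp n 1 f = Tn n f := rfl
lemma Pp_two (n : ℤ) (k : ℕ) (f : ℤ → ZMod 2) :
    Pp n (k+2) f = fun j => Tn n (Pp n (k+1) f) j + Pp n k f j := rfl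

lemma Pp_two' (n : ℤ) (k : ℕ) (f : ℤ → ZMod 2) (j : ℤ) :
    Pp n (k+2) f j = Tn n (Pp n (k+1) f) j + Pp n k f j := rfl

lemma two_step {P : ℕ → Prop} (h0 : P 0) (h1 : P 1)
    (h : ∀ k, P k → P (k+1) → P (k+2)) : ∀ k, P k := by
  have H : ∀ k, P k ∧ P (k+1) := by
    intro k
    induction k with
    | zero => exact ⟨h0, h1⟩
    | succ k ih => exact ⟨ih.2, h k ih.1 ih.2⟩
  exact fun k => (H k).1

def Supp (n : ℤ) (f : ℤ → ZMod 2) : Prop := ∀ j, ¬ inR n j → f j = 0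

lemma Tn_supp (n : ℤ) (f : ℤ → ZMod 2) : Supp n (Tn n f) := by
  intro j hj
  simp [Tn, hj]

lemma Pp_supp (n : ℤ) : ∀ k (f : ℤ → ZMod 2), Supp n f → Supp n (Pp n k f) := by
  refine two_step (fun f hf => hf) (fun f _ => Tn_supp n f) ?_
  intro k ih _ f hf j hj
  rw [Pp_two', Tn_supp n _ j hj, ih f hf j hj, add_zero]

lemma Tn_add (n : ℤ) (f g : ℤ → ZMod 2) :
    Tn n (fun j => f j + g j) = fun j => Tn n f j + Tn n g j := by
  funext j
  simp only [Tn]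
  split
  · ring
  · rw [add_zero]

lemma Pp_add (n : ℤ) :
    ∀ k (f g : ℤ → ZMod 2), Pp n k (fun j => f j + g j) = fun j => Pp n k f j + Pp n k g j := by
  refine two_step (fun f g => rfl) (fun f g => Tn_add n f g) ?_
  intro k ih ih1 f g
  funext j
  rw [Pp_two, ih1 f g, Tn_add, Pp_two, Pp_two, ih f g]
  ring

lemma Tn_comm_Pp (n : ℤ) : ∀ k (f : ℤ → ZMod 2), Tn n (Pp n k f) = Pp n k (Tn n f) := by
  refine two_step (fun f => rfl) (fun f => rfl) ?_
  intro k ih ih1 f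
  rw [Pp_two, Tn_add, ih1, ih]
  rw [Pp_two]

lemma Pp_comm (n : ℤ) :
    ∀ a b (f : ℤ → ZMod 2), Pp n a (Pp n b f) = Pp n b (Pp n a f) := by
  refine two_step (fun b f => rfl) (fun b f => Tn_comm_Pp n b f) ?_
  intro a ih ih1 b f
  rw [Pp_two, Pp_two]
  funext j
  rw [show Tn n (Pp n (a+1) (Pp n b f)) = Pp n b (Tn n (Pp n (a+1) f)) by
        rw [ih1 b f, ← Tn_comm_Pp],
      ih b f]
  have := congrFun (Pp_add n b (Tn n (Pp n (a+1) f)) (Pp n a f)) j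
  rw [this]

/-- The bilinear pairing. -/
noncomputable def inp (n : ℤ) (f g : ℤ → ZMod 2) : ZMod 2 :=
  ∑ k ∈ Finset.Icc (0:ℤ) (n-1), f k * g k

lemma inp_add_left (n : ℤ) (f g h : ℤ → ZMod 2) :
    inp n (fun j => f j + g j) h = inp n f h + inp n g h := by
  simp [inp, add_mul, Finset.sum_add_distrib]

lemma mem_Icc_iff_inR (n k : ℤ) : k ∈ Finset.Icc (0:ℤ) (n-1) ↔ inR n k := by
  simp [Finset.mem_Icc, inR]

lemma shift_sum (n : ℤ) (f g : ℤ → ZMod 2) (hf : Supp n f) (hg : Supp n g) :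
    ∑ k ∈ Finset.Icc (0:ℤ) (n-1), f (k-1) * g k
      = ∑ k ∈ Finset.Icc (0:ℤ) (n-1), f k * g (k+1) := by
  have e1 : ∑ k ∈ Finset.Icc (0:ℤ) (n-1), f (k-1) * g k
      = ∑ k ∈ Finset.Icc (-1:ℤ) (n-1), f (k-1) * g k := by
    refine Finset.sum_subset (Finset.Icc_subset_Icc (by omega) le_rfl) ?_
    intro x hx hnx
    simp only [Finset.mem_Icc] at hx hnx
    have hx1 : x = -1 := by omega
    rw [hg x (by simp [inR]; omega), mul_zero]
  have e2 : ∑ k ∈ Finset.Icc (-1:ℤ) (n-1), f (k-1) * g k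
      = ∑ k ∈ Finset.Icc (-2:ℤ) (n-2), f k * g (k+1) := by
    have hmap := Finset.map_add_right_Icc (-2:ℤ) (n-2) 1
    have : Finset.Icc (-1:ℤ) (n-1) = Finset.map (addRightEmbedding 1) (Finset.Icc (-2) (n-2)) := by
      rw [hmap, show (-2:ℤ)+1 = -1 from by norm_num, show n-2+1 = n-1 from by ring]
    rw [this, Finset.sum_map]
    apply Finset.sum_congr rfl
    intro x _
    simp only [addRightEmbedding_apply]
    norm_num
  have e3 : ∑ k ∈ Finset.Icc (-2:ℤ) (n-2), f k * g (k+1)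
      = ∑ k ∈ Finset.Icc (-2:ℤ) (n-1), f k * g (k+1) := by
    refine Finset.sum_subset (Finset.Icc_subset_Icc le_rfl (by omega)) ?_
    intro x hx hnx
    simp only [Finset.mem_Icc] at hx hnx
    have hx1 : x = n - 1 := by omega
    rw [hg (x+1) (by simp [inR]; omega), mul_zero]
  have e4 : ∑ k ∈ Finset.Icc (0:ℤ) (n-1), f k * g (k+1)
      = ∑ k ∈ Finset.Icc (-2:ℤ) (n-1), f k * g (k+1) := by
    refine Finset.sum_subset (Finset.Icc_subset_Icc (by omega) le_rfl) ?_
    intro x hx hnx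
    simp only [Finset.mem_Icc] at hx hnx
    rw [hf x (by simp [inR]; omega), zero_mul]
  rw [e1, e2, e3, ← e4]

lemma Tn_adjoint (n : ℤ) (f g : ℤ → ZMod 2) (hf : Supp n f) (hg : Supp n g) :
    inp n (Tn n f) g = inp n f (Tn n g) := by
  have h1 : inp n (Tn n f) g
      = ∑ k ∈ Finset.Icc (0:ℤ) (n-1), (f (k-1) * g k + f (k+1) * g k) := by
    apply Finset.sum_congr rfl
    intro k hk
    rw [Tn, if_pos ((mem_Icc_iff_inR n k).1 hk), add_mul]
  have h2 : inp n f (Tn n g)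
      = ∑ k ∈ Finset.Icc (0:ℤ) (n-1), (f k * g (k-1) + f k * g (k+1)) := by
    apply Finset.sum_congr rfl
    intro k hk
    rw [Tn, if_pos ((mem_Icc_iff_inR n k).1 hk), mul_add]
  rw [h1, h2, Finset.sum_add_distrib, Finset.sum_add_distrib]
  have hA := shift_sum n f g hf hg
  have hB : ∑ k ∈ Finset.Icc (0:ℤ) (n-1), f (k+1) * g k
      = ∑ k ∈ Finset.Icc (0:ℤ) (n-1), f k * g (k-1) := by
    have := shift_sum n g f hg hf
    calc ∑ k ∈ Finset.Icc (0:ℤ) (n-1), f (k+1) * g k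
        = ∑ k ∈ Finset.Icc (0:ℤ) (n-1), g k * f (k+1) := by
          apply Finset.sum_congr rfl; intros; ring
      _ = ∑ k ∈ Finset.Icc (0:ℤ) (n-1), g (k-1) * f k := this.symm
      _ = ∑ k ∈ Finset.Icc (0:ℤ) (n-1), f k * g (k-1) := by
          apply Finset.sum_congr rfl; intros; ring
  rw [hA, hB]
  ring

lemma Pp_adjoint (n : ℤ) :
    ∀ k (f g : ℤ → ZMod 2), Supp n f → Supp n g →
      inp n (Pp n k f) g = inp n f (Pp n k g) := by
  refine two_step (fun f g _ _ => rfl) (fun f g hf hg => Tn_adjoint n f g hf hg) ?_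
  intro k ih ih1 f g hf hg
  rw [Pp_two, Pp_two]
  have hL : inp n (fun j => Tn n (Pp n (k+1) f) j + Pp n k f j) g
      = inp n (Tn n (Pp n (k+1) f)) g + inp n (Pp n k f) g := inp_add_left n _ _ _
  have hR : inp n f (fun j => Tn n (Pp n (k+1) g) j + Pp n k g j)
      = inp n f (Tn n (Pp n (k+1) g)) + inp n f (Pp n k g) := by
    simp [inp, mul_add, Finset.sum_add_distrib]
  rw [hL, hR, ih f g hf hg]
  congr 1
  rw [Tn_adjoint n _ g (Pp_supp n (k+1) f hf) hg, Tn_comm_Pp,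
      ih1 f (Tn n g) hf (Tn_supp n g), ← Tn_comm_Pp,
      ← Tn_adjoint n f _ hf (Pp_supp n (k+1) g hg)]

/-- Standard basis vector. -/
def ev (i : ℤ) : ℤ → ZMod 2 := fun j => if j = i then 1 else 0

lemma ev_supp (n i : ℤ) (hi : inR n i) : Supp n (ev i) := by
  intro j hj
  simp only [ev]
  rw [if_neg]
  rintro rfl; exact hj hi

lemma inp_ev (n i : ℤ) (hi : inR n i) (g : ℤ → ZMod 2) : inp n (ev i) g = g i := by
  rw [inp]
  rw [Finset.sum_eq_single i]
  · simp [ev]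
  · intro b _ hb; simp [ev, hb]
  · intro h; exact absurd ((mem_Icc_iff_inR n i).2 hi) h

lemma Tn_ev (n a : ℤ) (h0 : 0 ≤ a) (h2 : a + 2 ≤ n - 1) :
    Tn n (ev (a+1)) = fun j => ev a j + ev (a+2) j := by
  funext j
  simp only [Tn, ev]
  by_cases hj : inR n j
  · rw [if_pos hj]
    have hj' : 0 ≤ j ∧ j ≤ n - 1 := hj
    split_ifs <;> first | decide | (exfalso; omega)
  · rw [if_neg hj]
    have hj' : ¬ (0 ≤ j ∧ j ≤ n - 1) := hj
    split_ifs <;> first | decide | (exfalso; omega)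

lemma Tn_ev0 (n : ℤ) (hn : 2 ≤ n) : Tn n (ev 0) = ev 1 := by
  funext j
  simp only [Tn, ev]
  by_cases hj : inR n j
  · rw [if_pos hj]
    have hj' : 0 ≤ j ∧ j ≤ n - 1 := hj
    split_ifs <;> first | decide | (exfalso; omega)
  · rw [if_neg hj]
    have hj' : ¬ (0 ≤ j ∧ j ≤ n - 1) := hj
    split_ifs <;> first | decide | (exfalso; omega)

lemma zmod2_cancel (a b : ZMod 2) : a + b + a = b := by
  revert a b; decide

lemma Pp_ev0 (n : ℤ) (hn : 2 ≤ n) :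
    ∀ a : ℕ, (a : ℤ) ≤ n - 1 → Pp n a (ev 0) = ev (a : ℤ) := by
  refine two_step ?_ ?_ ?_
  · intro _; funext j; rfl
  · intro _
    rw [Pp_one, Tn_ev0 n hn]; norm_num
  · intro a ih ih1 ha
    have ha1 : ((a:ℤ)+1) ≤ n - 1 := by push_cast at ha ⊢; omega
    have ha0 : (a:ℤ) ≤ n - 1 := by omega
    rw [Pp_two, ih1 ha1, ih ha0]
    have hTn := Tn_ev n (a:ℤ) (by positivity) (by push_cast at ha; omega)
    push_cast
    rw [show ((a:ℤ)+1) = (a:ℤ)+1 from rfl, hTn]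
    funext j
    rw [zmod2_cancel]

lemma zmod2_rel (a b c d : ZMod 2) (h : a + b + c + d = 0) : b = c + d + a := by
  revert a b c d; decide

end DiagSym


/-- Proposition 3(i): diagonal symmetry of harmonic functions. -/
theorem diagonal_symmetry (m n : ℤ) (hn : 2 ≤ n) (hmn : n ≤ m)
    (v : ℤ → ℤ → ZMod 2) (hv : IsHarmonic m n v) :
    ∀ i j : ℤ, 0 ≤ i → i ≤ n - 1 → 0 ≤ j → j ≤ n - 1 → v i j = v j i := by
  obtain ⟨hsupp, hrel⟩ := hv
  set r : ℤ → ZMod 2 := fun x => v 0 x with hr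
  have hsr : DiagSym.Supp n r := by
    intro x hx
    refine hsupp 0 x ?_
    intro hgg
    exact hx ⟨hgg.2.2.1, hgg.2.2.2⟩
  have hsrow : ∀ a : ℤ, DiagSym.Supp n (fun x => v a x) := by
    intro a x hx
    refine hsupp a x ?_
    intro hgg
    exact hx ⟨hgg.2.2.1, hgg.2.2.2⟩
  have hrow : ∀ a : ℕ, (a : ℤ) ≤ n - 1 → (fun x => v (a : ℤ) x) = DiagSym.Pp n a r := by
    refine DiagSym.two_step ?_ ?_ ?_
    · intro _
      rfl
    · intro _
      funext jj
      by_cases hjj : DiagSym.inR n jj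
      · obtain ⟨hjj0, hjj1⟩ := hjj
        have hg : InGrid m n 0 jj := ⟨le_refl 0, by omega, hjj0, hjj1⟩
        have h := hrel 0 jj hg
        have hz : v (0 - 1) jj = 0 := by
          refine hsupp _ _ ?_
          intro hgg
          have := hgg.1
          omega
        have key := DiagSym.zmod2_rel _ _ _ _ h
        rw [hz, add_zero] at key
        show v (0 + 1) jj = DiagSym.Tn n r jj
        have hin : DiagSym.inR n jj := ⟨hjj0, hjj1⟩
        rw [DiagSym.Tn, if_pos hin]
        exact key
      · show v (0 + 1) jj = DiagSym.Tn n r jj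
        rw [DiagSym.Tn, if_neg hjj]
        exact hsrow 1 jj hjj
    · intro a ih ih1 ha
      push_cast at ha
      have hle : (0:ℤ) ≤ (a:ℤ) := Int.natCast_nonneg a
      have ih1' := ih1 (by push_cast; omega)
      have ih' := ih (by omega)
      funext jj
      show v ((a:ℕ)+2 : ℕ) jj = DiagSym.Pp n (a+2) r jj
      rw [DiagSym.Pp_two']
      by_cases hjj : DiagSym.inR n jj
      · obtain ⟨hjj0, hjj1⟩ := hjj
        have hg : InGrid m n ((a:ℤ)+1) jj := ⟨by omega, by omega, hjj0, hjj1⟩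
        have h := hrel ((a:ℤ)+1) jj hg
        have e1 : (a:ℤ) + 1 - 1 = (a:ℤ) := by ring
        have e2 : (a:ℤ) + 1 + 1 = (a:ℤ) + 2 := by ring
        rw [e1, e2] at h
        have key := DiagSym.zmod2_rel _ _ _ _ h
        have hin : DiagSym.inR n jj := ⟨hjj0, hjj1⟩
        have c1 : DiagSym.Pp n (a+1) r (jj-1) = v ((a:ℤ)+1) (jj-1) := by
          calc DiagSym.Pp n (a+1) r (jj-1) = v ((a+1 : ℕ) : ℤ) (jj-1) :=
                (congrFun ih1' _).symm
            _ = v ((a:ℤ)+1) (jj-1) := by push_cast; rfl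
        have c2 : DiagSym.Pp n (a+1) r (jj+1) = v ((a:ℤ)+1) (jj+1) := by
          calc DiagSym.Pp n (a+1) r (jj+1) = v ((a+1 : ℕ) : ℤ) (jj+1) :=
                (congrFun ih1' _).symm
            _ = v ((a:ℤ)+1) (jj+1) := by push_cast; rfl
        have c3 : DiagSym.Pp n a r jj = v (a:ℤ) jj := (congrFun ih' _).symm
        rw [DiagSym.Tn, if_pos hin, c1, c2, c3]
        push_cast
        exact key
      · have z1 : v (((a:ℕ)+2 : ℕ) : ℤ) jj = 0 := hsrow _ jj hjj
        have z2 : DiagSym.Pp n a r jj = 0 := DiagSym.Pp_supp n a r hsr jj hjj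
        rw [DiagSym.Tn, if_neg hjj, zero_add, z1, z2]
  intro i j hi0 hi1 hj0 hj1
  have hai : ((i.toNat : ℤ)) = i := Int.toNat_of_nonneg hi0
  have hbj : ((j.toNat : ℤ)) = j := Int.toNat_of_nonneg hj0
  have hii : DiagSym.inR n i := ⟨hi0, hi1⟩
  have hjj : DiagSym.inR n j := ⟨hj0, hj1⟩
  have h0R : DiagSym.inR n 0 := ⟨le_refl 0, by omega⟩
  have h1 : v i j = DiagSym.Pp n i.toNat r j := by
    conv_lhs => rw [← hai]
    exact congrFun (hrow i.toNat (by rw [hai]; exact hi1)) j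
  have h2 : v j i = DiagSym.Pp n j.toNat r i := by
    conv_lhs => rw [← hbj]
    exact congrFun (hrow j.toNat (by rw [hbj]; exact hj1)) i
  rw [h1, h2]
  have pe_a : DiagSym.Pp n i.toNat (DiagSym.ev 0) = DiagSym.ev i := by
    rw [DiagSym.Pp_ev0 n hn i.toNat (by rw [hai]; exact hi1), hai]
  have pe_b : DiagSym.Pp n j.toNat (DiagSym.ev 0) = DiagSym.ev j := by
    rw [DiagSym.Pp_ev0 n hn j.toNat (by rw [hbj]; exact hj1), hbj]
  calc DiagSym.Pp n i.toNat r j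
      = DiagSym.inp n (DiagSym.ev j) (DiagSym.Pp n i.toNat r) :=
        (DiagSym.inp_ev n j hjj _).symm
    _ = DiagSym.inp n (DiagSym.Pp n j.toNat (DiagSym.ev 0)) (DiagSym.Pp n i.toNat r) := by
        rw [pe_b]
    _ = DiagSym.inp n (DiagSym.ev 0) (DiagSym.Pp n j.toNat (DiagSym.Pp n i.toNat r)) :=
        DiagSym.Pp_adjoint n j.toNat _ _ (DiagSym.ev_supp n 0 h0R)
          (DiagSym.Pp_supp n i.toNat r hsr)
    _ = DiagSym.inp n (DiagSym.ev 0) (DiagSym.Pp n i.toNat (DiagSym.Pp n j.toNat r)) := by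
        rw [DiagSym.Pp_comm]
    _ = DiagSym.inp n (DiagSym.Pp n i.toNat (DiagSym.ev 0)) (DiagSym.Pp n j.toNat r) :=
        (DiagSym.Pp_adjoint n i.toNat _ _ (DiagSym.ev_supp n 0 h0R)
          (DiagSym.Pp_supp n j.toNat r hsr)).symm
    _ = DiagSym.inp n (DiagSym.ev i) (DiagSym.Pp n j.toNat r) := by rw [pe_a]
    _ = DiagSym.Pp n j.toNat r i := DiagSym.inp_ev n i hii _
end

section
/- (Proposition 3(ii), reflection across a zero column.) Let m, n ≥ 2 and let v be a harmonic function on the m×n rectangular grid. Suppose v vanishes along the column x = m₀, i.e. v(m₀, j) = 0 for all 0 ≤ j ≤ n−1, where 0 ≤ m₀ ≤ m−1. Then for every i ≥ 0 and every j, if both (m₀−i, j) and (m₀+i, j) lie in the grid, one has v(m₀−i, j) = v(m₀+i, j). -/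
lemma reflection_key (m n : ℤ) (v : ℤ → ℤ → ZMod 2) (hv : IsHarmonic m n v)
    (m₀ : ℤ) (hz : ∀ j : ℤ, 0 ≤ j → j ≤ n - 1 → v m₀ j = 0) :
    ∀ N : ℕ, ∀ j : ℤ, 0 ≤ m₀ - (N:ℤ) → m₀ + (N:ℤ) ≤ m - 1 →
      v (m₀ - (N:ℤ)) j = v (m₀ + (N:ℤ)) j := by
  have hout := hv.1
  have hzero : ∀ a b : ℤ, (b < 0 ∨ b > n - 1) → v a b = 0 := fun a b h =>
    hout a b (fun ⟨_, _, h3, h4⟩ => by omega)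
  intro N
  induction N using Nat.strong_induction_on with
  | _ N ih =>
    match N with
    | 0 => intro j _ _; norm_num
    | 1 =>
      intro j h1 h2
      push_cast at h1 h2 ⊢
      by_cases hj : 0 ≤ j ∧ j ≤ n - 1
      · have hrel := hv.2 m₀ j ⟨by omega, by omega, hj.1, hj.2⟩
        have hz1 : v m₀ (j - 1) = 0 := by
          by_cases h : 0 ≤ j - 1
          · exact hz _ h (by omega)
          · exact hzero _ _ (by omega)
        have hz2 : v m₀ (j + 1) = 0 := by
          by_cases h : j + 1 ≤ n - 1
          · exact hz _ (by omega) h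
          · exact hzero _ _ (by omega)
        rw [hz1, hz2] at hrel
        have hsum : v (m₀ - 1) j + v (m₀ + 1) j = 0 := by linear_combination hrel
        rw [← neg_eq_of_add_eq_zero_left hsum, CharTwo.neg_eq]
      · rw [hzero _ _ (by omega), hzero _ _ (by omega)]
    | (k+2) =>
      intro j h1 h2
      push_cast at h1 h2 ⊢
      by_cases hj : 0 ≤ j ∧ j ≤ n - 1
      · have hA := hv.2 (m₀ - (k+1)) j ⟨by omega, by omega, hj.1, hj.2⟩
        have hB := hv.2 (m₀ + (k+1)) j ⟨by omega, by omega, hj.1, hj.2⟩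
        have e1 : m₀ - (k+1) - 1 = m₀ - (k+2:ℤ) := by ring
        have e2 : m₀ - (k+1) + 1 = m₀ - (k:ℤ) := by ring
        have e3 : m₀ + (k+1) - 1 = m₀ + (k:ℤ) := by ring
        have e4 : m₀ + (k+1) + 1 = m₀ + (k+2:ℤ) := by ring
        rw [e1, e2] at hA
        rw [e3, e4] at hB
        have ihk := ih k (by omega) j (by push_cast; omega) (by push_cast; omega)
        have ihk1l := ih (k+1) (by omega) (j-1) (by push_cast; omega) (by push_cast; omega)
        have ihk1r := ih (k+1) (by omega) (j+1) (by push_cast; omega) (by push_cast; omega)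
        push_cast at ihk ihk1l ihk1r
        rw [ihk, ihk1l, ihk1r] at hA
        linear_combination hA - hB
      · rw [hzero _ _ (by omega), hzero _ _ (by omega)]

/-- Proposition 3(ii): reflection across a zero column. -/
theorem reflection_zero_column (m n : ℤ) (hm : 2 ≤ m) (hn : 2 ≤ n)
    (v : ℤ → ℤ → ZMod 2) (hv : IsHarmonic m n v)
    (m₀ : ℤ) (hm₀ : 0 ≤ m₀ ∧ m₀ ≤ m - 1)
    (hz : ∀ j : ℤ, 0 ≤ j → j ≤ n - 1 → v m₀ j = 0) :
    ∀ i : ℤ, 0 ≤ i → ∀ j : ℤ, InGrid m n (m₀ - i) j → InGrid m n (m₀ + i) j →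
      v (m₀ - i) j = v (m₀ + i) j := by
  intro i hi j hL hR
  obtain ⟨N, rfl⟩ := Int.eq_ofNat_of_zero_le hi
  exact reflection_key m n v hv m₀ hz N j hL.1 hR.2.1
end

section
/- (Anti-diagonal symmetry, the analogue of Proposition 3(i) across the other diagonal.) Let m ≥ n ≥ 2 and let v be a harmonic function on the m×n rectangular grid. Then for all i, j with 0 ≤ i, j ≤ n−1 one has v(m−1−i, n−1−j) = v(m−1−j, n−1−i). -/
lemma zmod2_eq_of_add_eq_zero : ∀ x y : ZMod 2, x + y = 0 → x = y := by decide

/-- Diagonal symmetry at the origin corner: a harmonic function is symmetric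
on the n×n square at the corner. -/
lemma corner_symm (m n : ℤ) (hn : 2 ≤ n) (hmn : n ≤ m)
    (v : ℤ → ℤ → ZMod 2) (hv : IsHarmonic m n v) :
    ∀ a b : ℤ, a ≤ n - 1 → b ≤ n - 1 → v a b = v b a := by
  obtain ⟨h0, h1⟩ := hv
  have hneg : ∀ a b : ℤ, b < 0 → v a b + v b a = 0 := by
    intro a b hb
    rw [h0 a b (by simp [InGrid]; omega), h0 b a (by simp [InGrid]; omega), add_zero]
  have key : ∀ k : ℕ, ∀ a b : ℤ, 0 ≤ b → b ≤ a → a ≤ n - 1 →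
      (2 * (a + b) + (a - b)).toNat = k → v a b + v b a = 0 := by
    intro k
    induction k using Nat.strong_induction_on with
    | _ k ih =>
      intro a b hb hba han hk
      rcases eq_or_lt_of_le hba with heq | hlt
      · rw [← heq]
        exact CharTwo.add_self_eq_zero _
      rcases eq_or_lt_of_le (by omega : b + 1 ≤ a) with heq1 | hlt1
      · -- a = b + 1 : use the harmonic relation at (b, b)
        have hg : InGrid m n b b := by simp [InGrid]; omega
        have H := h1 b b hg
        have IH : v b (b - 1) + v (b - 1) b = 0 := by
          rcases lt_or_ge (b - 1) 0 with h' | h'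
          · exact hneg b (b - 1) h'
          · exact ih ((2 * (b + (b - 1)) + (b - (b - 1))).toNat) (by omega)
              b (b - 1) (by omega) (by omega) (by omega) rfl
        rw [← heq1]
        linear_combination H - IH
      · -- a ≥ b + 2 : use harmonic relations at (a-1, b) and (b, a-1)
        have hg1 : InGrid m n (a - 1) b := by simp [InGrid]; omega
        have hg2 : InGrid m n b (a - 1) := by simp [InGrid]; omega
        have H1 := h1 (a - 1) b hg1
        have H2 := h1 b (a - 1) hg2
        rw [show a - 1 - 1 = a - 2 from by ring, show a - 1 + 1 = a from by ring] at H1 H2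
        have IH1 : v (a - 1) (b + 1) + v (b + 1) (a - 1) = 0 :=
          ih ((2 * ((a - 1) + (b + 1)) + ((a - 1) - (b + 1))).toNat) (by omega)
            (a - 1) (b + 1) (by omega) (by omega) (by omega) rfl
        have IH2 : v (a - 1) (b - 1) + v (b - 1) (a - 1) = 0 := by
          rcases lt_or_ge (b - 1) 0 with h' | h'
          · exact hneg (a - 1) (b - 1) h'
          · exact ih ((2 * ((a - 1) + (b - 1)) + ((a - 1) - (b - 1))).toNat) (by omega)
              (a - 1) (b - 1) (by omega) (by omega) (by omega) rfl
        have IH3 : v (a - 2) b + v b (a - 2) = 0 :=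
          ih ((2 * ((a - 2) + b) + ((a - 2) - b)).toNat) (by omega)
            (a - 2) b (by omega) (by omega) (by omega) rfl
        linear_combination H1 + H2 - IH1 - IH2 - IH3
  intro a b ha hbn
  rcases lt_or_ge a 0 with ha0 | ha0
  · rw [h0 a b (by simp [InGrid]; omega), h0 b a (by simp [InGrid]; omega)]
  rcases lt_or_ge b 0 with hb0 | hb0
  · exact zmod2_eq_of_add_eq_zero _ _ (hneg a b hb0)
  rcases le_total b a with hba | hab
  · exact zmod2_eq_of_add_eq_zero _ _ (key _ a b hb0 hba ha rfl)
  · exact (zmod2_eq_of_add_eq_zero _ _ (key _ b a ha0 hab hbn rfl)).symm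

/-- anti-diagonal symmetry of harmonic functions. -/
theorem antidiagonal_symmetry (m n : ℤ) (hn : 2 ≤ n) (hmn : n ≤ m)
    (v : ℤ → ℤ → ZMod 2) (hv : IsHarmonic m n v) :
    ∀ i j : ℤ, 0 ≤ i → i ≤ n - 1 → 0 ≤ j → j ≤ n - 1 →
      v (m - 1 - i) (n - 1 - j) = v (m - 1 - j) (n - 1 - i) := by
  intro i j hi0 hi1 hj0 hj1
  obtain ⟨h0, h1⟩ := hv
  have hharm : IsHarmonic m n (fun a b => v (m - 1 - a) (n - 1 - b)) := by
    constructor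
    · intro a b hab
      apply h0
      simp only [InGrid] at hab ⊢
      omega
    · intro a b hab
      have hg : InGrid m n (m - 1 - a) (n - 1 - b) := by
        simp only [InGrid] at hab ⊢
        omega
      have H := h1 _ _ hg
      simp only
      rw [show m - 1 - (a - 1) = m - 1 - a + 1 from by ring,
          show m - 1 - (a + 1) = m - 1 - a - 1 from by ring,
          show n - 1 - (b - 1) = n - 1 - b + 1 from by ring,
          show n - 1 - (b + 1) = n - 1 - b - 1 from by ring]
      linear_combination H
  have := corner_symm m n hn hmn _ hharm i j (by omega) (by omega)
  simpa using this
end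

section
/- (Reflection across a zero row, the analogue of Proposition 3(ii).) Let m, n ≥ 2 and let v be a harmonic function on the m×n rectangular grid. Suppose v vanishes along the row y = n₀, i.e. v(i, n₀) = 0 for all 0 ≤ i ≤ m−1, where 0 ≤ n₀ ≤ n−1. Then for every j ≥ 0 and every i, if both (i, n₀−j) and (i, n₀+j) lie in the grid, one has v(i, n₀−j) = v(i, n₀+j). -/
/-- reflection across a zero row. -/
theorem reflection_zero_row (m n : ℤ) (hm : 2 ≤ m) (hn : 2 ≤ n)
    (v : ℤ → ℤ → ZMod 2) (hv : IsHarmonic m n v)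
    (n₀ : ℤ) (hn₀ : 0 ≤ n₀ ∧ n₀ ≤ n - 1)
    (hz : ∀ i : ℤ, 0 ≤ i → i ≤ m - 1 → v i n₀ = 0) :
    ∀ j : ℤ, 0 ≤ j → ∀ i : ℤ, InGrid m n i (n₀ - j) → InGrid m n i (n₀ + j) →
      v i (n₀ - j) = v i (n₀ + j) := by
  obtain ⟨hv0, hv1⟩ := hv
  obtain ⟨hn₀0, hn₀1⟩ := hn₀
  -- zero on row n₀ for all i
  have hz' : ∀ i : ℤ, v i n₀ = 0 := by
    intro i
    by_cases h : 0 ≤ i ∧ i ≤ m - 1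
    · exact hz i h.1 h.2
    · apply hv0
      intro ⟨h1, h2, _, _⟩
      exact h ⟨h1, h2⟩
  have addcancel : ∀ a b : ZMod 2, a + b = 0 → a = b := by
    intro a b h
    rw [← sub_eq_zero, sub_eq_add_neg, CharTwo.neg_eq]
    exact h
  have key : ∀ k : ℕ, ∀ i : ℤ, InGrid m n i (n₀ - k) → InGrid m n i (n₀ + k) →
      v i (n₀ - k) = v i (n₀ + k) := by
    intro k
    induction k using Nat.strong_induction_on with
    | _ k ih =>
      match k with
      | 0 => intro i _ _; norm_num
      | 1 =>
        intro i ⟨hi0, hi1, hj0, hj1⟩ ⟨_, _, hj2, hj3⟩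
        have heq := hv1 i n₀ ⟨hi0, hi1, hn₀0, hn₀1⟩
        rw [hz' (i-1), hz' (i+1)] at heq
        push_cast
        exact addcancel _ _ (by linear_combination heq)
      | (k+2) =>
        intro i ⟨hi0, hi1, hj0, hj1⟩ ⟨_, _, hj2, hj3⟩
        push_cast at hj0 hj1 hj2 hj3 ⊢
        -- equations at (i, n₀ - (k+1)) and (i, n₀ + (k+1))
        have e1 := hv1 i (n₀ - (k+1)) ⟨hi0, hi1, by push_cast; omega, by push_cast; omega⟩
        have e2 := hv1 i (n₀ + (k+1)) ⟨hi0, hi1, by push_cast; omega, by push_cast; omega⟩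
        -- side equalities at distance k+1 for i-1 and i+1
        have side : ∀ i' : ℤ, v i' (n₀ - (k+1)) = v i' (n₀ + (k+1)) := by
          intro i'
          by_cases h : 0 ≤ i' ∧ i' ≤ m - 1
          · have := ih (k+1) (by omega) i'
              ⟨h.1, h.2, by push_cast; omega, by push_cast; omega⟩
              ⟨h.1, h.2, by push_cast; omega, by push_cast; omega⟩
            push_cast at this; exact this
          · rw [hv0 i' (n₀ - (k+1)) (fun ⟨a, b, _, _⟩ => h ⟨a, b⟩),
              hv0 i' (n₀ + (k+1)) (fun ⟨a, b, _, _⟩ => h ⟨a, b⟩)]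
        have mid : v i (n₀ - k) = v i (n₀ + k) := by
          have := ih k (by omega) i
            ⟨hi0, hi1, by push_cast; omega, by push_cast; omega⟩
            ⟨hi0, hi1, by push_cast; omega, by push_cast; omega⟩
          push_cast at this; exact this
        have h1 : v i (n₀ - (k+1) - 1) = v i (n₀ - (k+2)) := by ring_nf
        have h2 : v i (n₀ - (k+1) + 1) = v i (n₀ - k) := by ring_nf
        have h3 : v i (n₀ + (k+1) + 1) = v i (n₀ + (k+2)) := by ring_nf
        have h4 : v i (n₀ + (k+1) - 1) = v i (n₀ + k) := by ring_nf
        rw [h1, h2, side (i-1), side (i+1), mid] at e1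
        rw [h3, h4] at e2
        apply addcancel
        have two : (2 : ZMod 2) = 0 := rfl
        linear_combination e1 + e2 -
          (v (i-1) (n₀+((k:ℤ)+1)) + v (i+1) (n₀+((k:ℤ)+1)) + v i (n₀+(k:ℤ))) * two
  intro j hj i h1 h2
  have : j = ((j.toNat : ℤ)) := by omega
  rw [this] at h1 h2 ⊢
  exact key j.toNat i h1 h2
end

section
/- (Theorem 3(i).) Let m, n ≥ 2 be integers, c = gcd(m+1, n+1) − 1, and let v be a harmonic function on the m×n rectangular grid. Then v vanishes on the grid 𝒢: for every point (i,j) of the grid with i ≡ −1 (mod c+1) or j ≡ −1 (mod c+1), one has v(i,j) = 0. -/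
def gridFold (a i : ℤ) : ℤ :=
  (if (i + 1) % (2 * a) ≤ a then (i + 1) % (2 * a) else 2 * a - (i + 1) % (2 * a)) - 1

lemma gridFold_mem (a : ℤ) (ha : 3 ≤ a) (i : ℤ) :
    -1 ≤ gridFold a i ∧ gridFold a i ≤ a - 1 := by
  unfold gridFold
  have h0 : 0 ≤ (i + 1) % (2 * a) := Int.emod_nonneg _ (by omega)
  have h1 : (i + 1) % (2 * a) < 2 * a := Int.emod_lt_of_pos _ (by omega)
  split <;> omega

lemma gridFold_id (a : ℤ) (ha : 3 ≤ a) (i : ℤ) (h1 : -1 ≤ i) (h2 : i ≤ a - 1) :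
    gridFold a i = i := by
  unfold gridFold
  rw [Int.emod_eq_of_lt (by omega) (by omega)]
  split <;> omega

lemma gridFold_line (a : ℤ) (ha : 3 ≤ a) (i : ℤ) (h : a ∣ i + 1) :
    gridFold a i = -1 ∨ gridFold a i = a - 1 := by
  obtain ⟨k, hk⟩ := h
  unfold gridFold
  rcases Int.even_or_odd k with ⟨l, hl⟩ | ⟨l, hl⟩
  · have h2 : i + 1 = 0 + 2 * a * l := by rw [hk, hl]; ring
    rw [h2, Int.add_mul_emod_self_left 0 (2*a) l, Int.zero_emod,
      if_pos (by omega : (0:ℤ) ≤ a)]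
    left; ring
  · have h2 : i + 1 = a + 2 * a * l := by rw [hk, hl]; ring
    rw [h2, Int.add_mul_emod_self_left a (2*a) l,
      Int.emod_eq_of_lt (by omega) (by omega), if_pos le_rfl]
    right; ring

lemma gridFold_cases (a : ℤ) (ha : 3 ≤ a) (i : ℤ) :
    (gridFold a (i-1) = gridFold a i - 1 ∧ gridFold a (i+1) = gridFold a i + 1) ∨
    (gridFold a (i-1) = gridFold a i + 1 ∧ gridFold a (i+1) = gridFold a i - 1) ∨
    (gridFold a (i-1) = gridFold a (i+1) ∧ (gridFold a i = -1 ∨ gridFold a i = a - 1)) := by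
  have h2a : (0:ℤ) < 2*a := by omega
  have h0 : 0 ≤ (i+1) % (2*a) := Int.emod_nonneg _ (by omega)
  have h1 : (i+1) % (2*a) < 2*a := Int.emod_lt_of_pos _ h2a
  set r := (i+1) % (2*a) with hr
  have hq : r + 2*a * ((i+1)/(2*a)) = i + 1 := Int.emod_add_mul_ediv _ _
  set q := (i+1)/(2*a) with hqdef
  have hplus : (i + 1 + 1) % (2*a) = (r + 1) % (2*a) := by
    have h : i + 1 + 1 = (r+1) + 2*a*q := by linear_combination -hq
    rw [h, Int.add_mul_emod_self_left]
  have hminus : (i - 1 + 1) % (2*a) = (r - 1 + 2*a) % (2*a) := by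
    have h : i - 1 + 1 = (r - 1 + 2*a) + 2*a*(q-1) := by linear_combination -hq
    rw [h, Int.add_mul_emod_self_left]
  have F0 : gridFold a i = (if r ≤ a then r else 2*a - r) - 1 := by
    unfold gridFold; rw [← hr]
  have Fp : gridFold a (i+1) =
      (if (r+1) % (2*a) ≤ a then (r+1) % (2*a) else 2*a - (r+1) % (2*a)) - 1 := by
    unfold gridFold; rw [hplus]
  have Fm : gridFold a (i-1) =
      (if (r-1+2*a) % (2*a) ≤ a then (r-1+2*a) % (2*a) else 2*a - (r-1+2*a) % (2*a)) - 1 := by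
    unfold gridFold; rw [hminus]
  rcases (by omega : r = 0 ∨ r = 2*a-1 ∨ (1 ≤ r ∧ r ≤ 2*a - 2)) with h | h | h
  · have em : (r - 1 + 2*a) % (2*a) = 2*a - 1 := by
      rw [Int.emod_eq_of_lt (by omega) (by omega)]; omega
    have ep : (r + 1) % (2*a) = 1 := by
      rw [Int.emod_eq_of_lt (by omega) (by omega)]; omega
    rw [em] at Fm; rw [ep] at Fp
    rw [Fm, Fp, F0]; split_ifs <;> omega
  · have em : (r - 1 + 2*a) % (2*a) = r - 1 := by
      have h' : r - 1 + 2*a = (r-1) + 2*a*1 := by ring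
      rw [h', Int.add_mul_emod_self_left, Int.emod_eq_of_lt (by omega) (by omega)]
    have ep : (r + 1) % (2*a) = 0 := by
      have h' : r + 1 = 0 + 2*a*1 := by omega
      rw [h', Int.add_mul_emod_self_left, Int.zero_emod]
    rw [em] at Fm; rw [ep] at Fp
    rw [Fm, Fp, F0]; split_ifs <;> omega
  · have em : (r - 1 + 2*a) % (2*a) = r - 1 := by
      have h' : r - 1 + 2*a = (r-1) + 2*a*1 := by ring
      rw [h', Int.add_mul_emod_self_left, Int.emod_eq_of_lt (by omega) (by omega)]
    have ep : (r + 1) % (2*a) = r + 1 := Int.emod_eq_of_lt (by omega) (by omega)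
    rw [em] at Fm; rw [ep] at Fp
    rw [Fm, Fp, F0]; split_ifs <;> omega

-- char-2 helpers
lemma z2add : ∀ x : ZMod 2, x + x = 0 := by decide
lemma f2A : ∀ A B C D R : ZMod 2, A + B + C + D = 0 → C + B = R → A + D = R := by decide
lemma f2C : ∀ P Y X Q R : ZMod 2, P + Y + X + Q = 0 → P + Q = R → X + Y = R := by decide
lemma f2B : ∀ A M N S F : ZMod 2, A + M = S → M + N = F → A + N = S + F := by decide

def Vext (m n : ℤ) (v : ℤ → ℤ → ZMod 2) (i j : ℤ) : ZMod 2 :=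
  v (gridFold (m+1) i) (gridFold (n+1) j)

section
variable (m n : ℤ) (v : ℤ → ℤ → ZMod 2)

lemma Vext_grid (hm : 2 ≤ m) (hn : 2 ≤ n) (i j : ℤ) (h : InGrid m n i j) :
    Vext m n v i j = v i j := by
  obtain ⟨h1, h2, h3, h4⟩ := h
  unfold Vext
  rw [gridFold_id (m+1) (by omega) i (by omega) (by omega),
      gridFold_id (n+1) (by omega) j (by omega) (by omega)]

lemma Vext_zero_left (hm : 2 ≤ m) (hn : 2 ≤ n) (hv : IsHarmonic m n v) (i j : ℤ)
    (h : (m+1) ∣ i + 1) : Vext m n v i j = 0 := by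
  unfold Vext
  rcases gridFold_line (m+1) (by omega) i h with h' | h' <;> rw [h'] <;>
    exact hv.1 _ _ (by unfold InGrid; omega)

lemma Vext_zero_right (hm : 2 ≤ m) (hn : 2 ≤ n) (hv : IsHarmonic m n v) (i j : ℤ)
    (h : (n+1) ∣ j + 1) : Vext m n v i j = 0 := by
  unfold Vext
  rcases gridFold_line (n+1) (by omega) j h with h' | h' <;> rw [h'] <;>
    exact hv.1 _ _ (by unfold InGrid; omega)

lemma Vext_harm (hm : 2 ≤ m) (hn : 2 ≤ n) (hv : IsHarmonic m n v) (i j : ℤ) :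
    Vext m n v (i-1) j + Vext m n v (i+1) j
      + Vext m n v i (j-1) + Vext m n v i (j+1) = 0 := by
  unfold Vext
  have hmi := gridFold_mem (m+1) (by omega) i
  have hmi1 := gridFold_mem (m+1) (by omega) (i-1)
  have hmi2 := gridFold_mem (m+1) (by omega) (i+1)
  have hmj := gridFold_mem (n+1) (by omega) j
  have hmj1 := gridFold_mem (n+1) (by omega) (j-1)
  have hmj2 := gridFold_mem (n+1) (by omega) (j+1)
  rcases gridFold_cases (m+1) (by omega) i with ⟨e1, e2⟩ | ⟨e1, e2⟩ | ⟨e1, hdeg⟩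
  rotate_right
  · -- i degenerate: first pair cancels, second pair individually zero
    rw [e1, hv.1 _ _ (show ¬ InGrid m n (gridFold (m+1) i) (gridFold (n+1) (j-1)) by
          unfold InGrid; omega),
        hv.1 _ _ (show ¬ InGrid m n (gridFold (m+1) i) (gridFold (n+1) (j+1)) by
          unfold InGrid; omega)]
    simp only [add_zero]
    exact z2add _
  all_goals {
    rcases gridFold_cases (n+1) (by omega) j with ⟨f1, f2⟩ | ⟨f1, f2⟩ | ⟨f1, hdegj⟩
    rotate_right
    · -- j degenerate
      rw [f1, hv.1 _ _ (show ¬ InGrid m n (gridFold (m+1) (i-1)) (gridFold (n+1) j) by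
            unfold InGrid; omega),
          hv.1 _ _ (show ¬ InGrid m n (gridFold (m+1) (i+1)) (gridFold (n+1) j) by
            unfold InGrid; omega)]
      simp only [zero_add]
      exact z2add _
    all_goals {
      have hgrid : InGrid m n (gridFold (m+1) i) (gridFold (n+1) j) := by
        unfold InGrid; constructor; omega; constructor; omega; constructor; omega; omega
      have H := hv.2 _ _ hgrid
      rw [e1, e2, f1, f2]
      linear_combination H
    }
  }

def Fd (m n : ℤ) (v : ℤ → ℤ → ZMod 2) (e : ℤ) : ZMod 2 :=
  Vext m n v e 0 + Vext m n v (e+1) 1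

lemma Fd_spec (hm : 2 ≤ m) (hn : 2 ≤ n) (hv : IsHarmonic m n v) :
    ∀ j i : ℤ, Vext m n v i j + Vext m n v (i+1) (j+1) = Fd m n v (i+j) := by
  intro j
  induction j using Int.induction_on with
  | zero => intro i; unfold Fd; norm_num
  | succ k ih =>
    intro i
    have H := Vext_harm m n v hm hn hv (i+1) ((k:ℤ)+1)
    rw [show i + 1 - 1 = i from by ring, show (k:ℤ) + 1 - 1 = (k:ℤ) from by ring] at H
    have I := ih (i+1)
    rw [show i + 1 + (k:ℤ) = i + ((k:ℤ)+1) from by ring] at I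
    exact f2A _ _ _ _ _ H I
  | pred k ih =>
    intro i
    have H := Vext_harm m n v hm hn hv i (-(k:ℤ))
    have I := ih (i-1)
    rw [show i - 1 + 1 = i from by ring, show i - 1 + -(k:ℤ) = i + (-(k:ℤ)-1) from by ring] at I
    rw [show -(k:ℤ) - 1 + 1 = -(k:ℤ) from by ring, show -(k:ℤ) - 1 = -(k:ℤ) - 1 from rfl]
    exact f2C _ _ _ _ _ H I

def Sw (m n : ℤ) (v : ℤ → ℤ → ZMod 2) (e : ℤ) : ℕ → ZMod 2
  | 0 => 0
  | t+1 => Sw m n v e t + Fd m n v (e + 2*(t:ℤ))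

lemma walk (hm : 2 ≤ m) (hn : 2 ≤ n) (hv : IsHarmonic m n v) :
    ∀ (t : ℕ) (i j : ℤ),
      Vext m n v i j + Vext m n v (i + t) (j + t) = Sw m n v (i+j) t := by
  intro t
  induction t with
  | zero =>
    intro i j
    simp only [Nat.cast_zero, add_zero, Sw]
    exact z2add _
  | succ t ih =>
    intro i j
    have I := ih i j
    have HF := Fd_spec m n v hm hn hv (j + (t:ℤ)) (i + (t:ℤ))
    rw [show i + (t:ℤ) + (j + (t:ℤ)) = (i + j) + 2*(t:ℤ) from by ring] at HF
    have goalrw : ((t:ℕ)+1 : ℕ) = t + 1 := rfl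
    show Vext m n v i j + Vext m n v (i + ((t:ℕ)+1 : ℕ)) (j + ((t:ℕ)+1 : ℕ)) =
      Sw m n v (i+j) t + Fd m n v ((i+j) + 2*(t:ℤ))
    rw [show ((((t:ℕ)+1 : ℕ)) : ℤ) = (t:ℤ) + 1 from by push_cast; ring,
        show i + ((t:ℤ)+1) = i + (t:ℤ) + 1 from by ring,
        show j + ((t:ℤ)+1) = j + (t:ℤ) + 1 from by ring]
    exact f2B _ _ _ _ _ I HF

lemma Sw_add (x y : ℕ) (e : ℤ) :
    Sw m n v e (x + y) = Sw m n v e x + Sw m n v (e + 2*(x:ℤ)) y := by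
  induction y with
  | zero => simp [Sw]
  | succ y ih =>
    show Sw m n v e ((x + y) + 1) = _
    simp only [Sw]
    rw [ih, show e + 2*((x + y : ℕ):ℤ) = (e + 2*(x:ℤ)) + 2*(y:ℤ) from by push_cast; ring,
      add_assoc]

lemma Sw_mul (L : ℕ) (h : ∀ e, Sw m n v e L = 0) (q : ℕ) :
    ∀ e, Sw m n v e (L * q) = 0 := by
  induction q with
  | zero => intro e; simp [Nat.mul_zero, Sw]
  | succ q ih => intro e; rw [Nat.mul_succ, Sw_add, ih, h]; simp

lemma Sw_mod (x y : ℕ) (hx : ∀ e, Sw m n v e x = 0) (hy : ∀ e, Sw m n v e y = 0) :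
    ∀ e, Sw m n v e (y % x) = 0 := by
  intro e
  have hd : x * (y / x) + y % x = y := Nat.div_add_mod y x
  have h1 := Sw_add m n v (x * (y / x)) (y % x) (e - 2*((x * (y / x) : ℕ):ℤ))
  rw [hd, hy, Sw_mul m n v x hx (y / x),
    show e - 2*((x * (y / x) : ℕ):ℤ) + 2*((x * (y / x) : ℕ):ℤ) = e from by ring] at h1
  simpa using h1.symm

lemma Sw_gcd (x y : ℕ) (hx : ∀ e, Sw m n v e x = 0) (hy : ∀ e, Sw m n v e y = 0) :
    ∀ e, Sw m n v e (Nat.gcd x y) = 0 := by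
  induction x, y using Nat.gcd.induction with
  | H0 y => intro e; rw [Nat.gcd_zero_left]; exact hy e
  | H1 x y hpos ih =>
    intro e
    rw [Nat.gcd_rec]
    exact ih (Sw_mod m n v x y hx hy) hx e

end

/-- Theorem 3(i): harmonic functions vanish on the grid 𝒢,
i.e. at every grid point with i ≡ −1 or j ≡ −1 (mod c+1). -/
theorem vanishes_on_grid_lines (m n : ℤ) (hm : 2 ≤ m) (hn : 2 ≤ n)
    (c : ℕ) (hc : c = Int.gcd (m + 1) (n + 1) - 1)
    (v : ℤ → ℤ → ZMod 2) (hv : IsHarmonic m n v) :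
    ∀ i j : ℤ, InGrid m n i j →
      (((c : ℤ) + 1) ∣ (i + 1) ∨ ((c : ℤ) + 1) ∣ (j + 1)) → v i j = 0 := by
  intro i j hij hdvd
  have hA : (((m+1).natAbs : ℕ) : ℤ) = m + 1 := Int.natAbs_of_nonneg (by omega)
  have hB : (((n+1).natAbs : ℕ) : ℤ) = n + 1 := Int.natAbs_of_nonneg (by omega)
  set A := (m+1).natAbs with hAdef
  set B := (n+1).natAbs with hBdef
  have wA : ∀ e, Sw m n v e A = 0 := by
    intro e
    have W := walk m n v hm hn hv A m (e - m)
    rw [hA] at W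
    rw [Vext_zero_left m n v hm hn hv _ _ ⟨1, by ring⟩,
        Vext_zero_left m n v hm hn hv _ _ (⟨2, by ring⟩ : (m+1) ∣ (m + (m+1) + 1)),
        show m + (e - m) = e from by ring] at W
    simpa using W.symm
  have wB : ∀ e, Sw m n v e B = 0 := by
    intro e
    have W := walk m n v hm hn hv B (e - n) n
    rw [hB] at W
    rw [Vext_zero_right m n v hm hn hv _ _ ⟨1, by ring⟩,
        Vext_zero_right m n v hm hn hv _ _ (⟨2, by ring⟩ : (n+1) ∣ (n + (n+1) + 1)),
        show (e - n) + n = e from by ring] at W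
    simpa using W.symm
  have wG : ∀ e, Sw m n v e (Nat.gcd A B) = 0 := Sw_gcd m n v A B wA wB
  have hgpos : 0 < Nat.gcd A B := Nat.gcd_pos_of_pos_left _ (by omega)
  have hgcd_eq : Int.gcd (m+1) (n+1) = Nat.gcd A B := rfl
  have hc' : c + 1 = Nat.gcd A B := by rw [hgcd_eq] at hc; omega
  have hcg : ((c:ℤ)) + 1 = ((Nat.gcd A B : ℕ) : ℤ) := by omega
  rcases hdvd with hd | hd
  · rw [hcg] at hd
    have ht0 : 0 ≤ (-1 - i) % (m+1) := Int.emod_nonneg _ (by omega)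
    set t : ℕ := ((-1 - i) % (m+1)).toNat with htdef
    have htt : (t:ℤ) = (-1 - i) % (m+1) := Int.toNat_of_nonneg ht0
    have hq : (-1 - i) % (m+1) + (m+1) * ((-1-i)/(m+1)) = -1 - i := Int.emod_add_mul_ediv _ _
    set q := (-1-i)/(m+1) with hqdef
    have hdvd_a : (m+1) ∣ (i + (t:ℤ) + 1) := ⟨-q, by rw [htt]; linear_combination hq⟩
    have hgm : ((Nat.gcd A B : ℕ) : ℤ) ∣ (m+1) := by
      rw [← hA]; exact_mod_cast Nat.gcd_dvd_left A B
    have hgt : ((Nat.gcd A B : ℕ) : ℤ) ∣ (t:ℤ) := by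
      have h2 : ((Nat.gcd A B : ℕ) : ℤ) ∣ (-(i+1) - (m+1)*q) :=
        dvd_sub (dvd_neg.mpr hd) (hgm.mul_right q)
      rwa [show -(i+1) - (m+1)*q = (t:ℤ) from by rw [htt]; linear_combination -hq] at h2
    obtain ⟨s, hs⟩ : Nat.gcd A B ∣ t := Int.natCast_dvd_natCast.mp hgt
    have hSw : Sw m n v (i+j) t = 0 := by rw [hs]; exact Sw_mul m n v _ wG s _
    have W := walk m n v hm hn hv t i j
    rw [hSw, Vext_zero_left m n v hm hn hv (i + (t:ℤ)) (j + (t:ℤ)) hdvd_a] at W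
    rw [← Vext_grid m n v hm hn i j hij]
    simpa using W
  · rw [hcg] at hd
    have ht0 : 0 ≤ (-1 - j) % (n+1) := Int.emod_nonneg _ (by omega)
    set t : ℕ := ((-1 - j) % (n+1)).toNat with htdef
    have htt : (t:ℤ) = (-1 - j) % (n+1) := Int.toNat_of_nonneg ht0
    have hq : (-1 - j) % (n+1) + (n+1) * ((-1-j)/(n+1)) = -1 - j := Int.emod_add_mul_ediv _ _
    set q := (-1-j)/(n+1) with hqdef
    have hdvd_b : (n+1) ∣ (j + (t:ℤ) + 1) := ⟨-q, by rw [htt]; linear_combination hq⟩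
    have hgn : ((Nat.gcd A B : ℕ) : ℤ) ∣ (n+1) := by
      rw [← hB]; exact_mod_cast Nat.gcd_dvd_right A B
    have hgt : ((Nat.gcd A B : ℕ) : ℤ) ∣ (t:ℤ) := by
      have h2 : ((Nat.gcd A B : ℕ) : ℤ) ∣ (-(j+1) - (n+1)*q) :=
        dvd_sub (dvd_neg.mpr hd) (hgn.mul_right q)
      rwa [show -(j+1) - (n+1)*q = (t:ℤ) from by rw [htt]; linear_combination -hq] at h2
    obtain ⟨s, hs⟩ : Nat.gcd A B ∣ t := Int.natCast_dvd_natCast.mp hgt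
    have hSw : Sw m n v (i+j) t = 0 := by rw [hs]; exact Sw_mul m n v _ wG s _
    have W := walk m n v hm hn hv t i j
    rw [hSw, Vext_zero_right m n v hm hn hv (i + (t:ℤ)) (j + (t:ℤ)) hdvd_b] at W
    rw [← Vext_grid m n v hm hn i j hij]
    simpa using W
end

section
/- (Theorem 3(iii), mirror symmetry across the grid.) Let m, n ≥ 2 be integers, c = gcd(m+1, n+1) − 1, and let v be a harmonic function on the m×n rectangular grid. Then for every positive integer k with k(c+1) − 1 ≤ m−1, every i ≥ 0 and every 0 ≤ j ≤ n−1, if both (k(c+1)−1−i, j) and (k(c+1)−1+i, j) lie in the grid then v(k(c+1)−1−i, j) = v(k(c+1)−1+i, j); and symmetrically for horizontal grid lines: for every positive integer k with k(c+1) − 1 ≤ n−1, if both (i, k(c+1)−1−j) and (i, k(c+1)−1+j) lie in the grid then v(i, k(c+1)−1−j) = v(i, k(c+1)−1+j). -/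
section Helper
set_option synthInstance.maxHeartbeats 400000
set_option maxHeartbeats 1000000
open Polynomial Finset

private noncomputable def QQ : ℕ → Polynomial (ZMod 2)
  | 0 => 0
  | 1 => 1
  | (t+2) => X * QQ (t+1) + QQ t

private lemma QQ0 : QQ 0 = 0 := by simp [QQ]
private lemma QQ1 : QQ 1 = 1 := by simp [QQ]
private lemma QQrec (t : ℕ) : QQ (t+2) = X * QQ (t+1) + QQ t := by simp [QQ]

private lemma h2P : (2 : Polynomial (ZMod 2)) = 0 := CharTwo.two_eq_zero

/-- two-step induction helper -/
private lemma two_step {P : ℕ → Prop} (h0 : P 0) (h1 : P 1)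
    (hstep : ∀ t, P t → P (t+1) → P (t+2)) : ∀ t, P t := by
  have : ∀ t, P t ∧ P (t+1) := by
    intro t
    induction t with
    | zero => exact ⟨h0, h1⟩
    | succ t ih => exact ⟨ih.2, hstep t ih.1 ih.2⟩
  exact fun t => (this t).1

private lemma QQ_addf : ∀ a b : ℕ, QQ (a + b + 1) = QQ (a+1) * QQ (b+1) + QQ a * QQ b := by
  refine two_step ?_ ?_ ?_
  · intro b; simp [QQ0, QQ1]
  · intro b
    rw [show 1 + b + 1 = b + 2 from by omega, QQrec b, QQrec 0]
    simp [QQ0, QQ1]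
  · intro a ih1 ih2 b
    have h1 := ih2 b
    have h0 := ih1 b
    rw [show a + 1 + b + 1 = (a + b) + 2 from by omega, show a + 1 + 1 = a + 2 from rfl] at h1
    rw [show a + 2 + b + 1 = (a + b + 1) + 2 from by omega, QQrec (a+b+1),
      show a + 3 = (a+1) + 2 from by omega, QQrec (a+1),
      show a + b + 1 + 1 = (a+b) + 2 from by omega]
    linear_combination X * h1 + h0 - QQ b * QQrec a

private lemma QQ_sub : ∀ b c : ℕ, QQ (c+b+1) * QQ b + QQ (c+b) * QQ (b+1) = QQ c := by
  intro b
  induction b with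
  | zero => intro c; simp [QQ0, QQ1]
  | succ b ih =>
    intro c
    have h := ih c
    rw [show c+(b+1)+1 = (c+b)+2 from by omega, show c+(b+1) = (c+b)+1 from by omega,
      QQrec (c+b), QQrec b]
    linear_combination h + X * QQ (c+b+1) * QQ (b+1) * h2P

private lemma QQ_mirror (b c : ℕ) :
    QQ (c + 2*b) + QQ c = X * QQ (c+b) * QQ b := by
  cases b with
  | zero =>
    simp [QQ0]
    linear_combination QQ c * h2P
  | succ b =>
    have h1 := QQ_addf (c+b+1) b
    rw [show c+b+1+b+1 = c + 2*(b+1) from by omega, show c+b+1+1 = c+b+2 from rfl] at h1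
    have h2 := QQ_sub b c
    have h3 := QQrec (c+b)
    rw [show c+(b+1) = c+b+1 from by omega]
    linear_combination h1 + h2 + QQ (b+1) * h3 + QQ c * h2P

private lemma QQ_dvd (d t : ℕ) : QQ d ∣ QQ (d * t) := by
  induction t with
  | zero => simp [QQ0]
  | succ t ih =>
    rcases Nat.eq_zero_or_pos d with hd | hd
    · simp [hd, QQ0]
    · have h1 := QQ_addf (d*t) (d-1)
      rw [show d*t + (d-1) + 1 = d * (t+1) from by rw [Nat.mul_succ]; omega, show d - 1 + 1 = d from by omega] at h1
      rw [h1]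
      exact dvd_add (Dvd.intro_left _ rfl) (ih.mul_right _)

private lemma QQ_coprime : ∀ t : ℕ, IsCoprime (QQ (t+1)) (QQ t) := by
  intro t
  induction t with
  | zero => rw [QQ0]; exact isCoprime_one_left
  | succ t ih =>
    have : QQ (t+2) = QQ t + QQ (t+1) * X := by rw [QQrec]; ring
    rw [this]
    exact ih.symm.add_mul_left_left X

private lemma QQ_helper : ∀ (t m r : ℕ), 1 ≤ m → ∀ (J : Ideal (Polynomial (ZMod 2))),
    QQ m ∈ J → QQ (m*t + r) ∈ J → QQ r ∈ J := by
  intro t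
  induction t with
  | zero => intro m r _ J _ h; simpa using h
  | succ t ih =>
    intro m r hm J hmJ hbig
    have h1 := QQ_addf (m*t+r) (m-1)
    rw [show m*t + r + (m-1) + 1 = m * (t+1) + r from by rw [Nat.mul_succ]; omega,
      show m - 1 + 1 = m from by omega] at h1
    -- QQ (m*t+r) * QQ (m-1) = QQ (m*(t+1)+r) + QQ (m*t+r+1) * QQ m
    have hmem : QQ (m*t+r) * QQ (m-1) ∈ J := by
      have : QQ (m*t+r) * QQ (m-1) = QQ (m*(t+1)+r) + QQ (m*t+r+1) * QQ m := by
        linear_combination h1 + (QQ (m*t+r) * QQ (m-1) - QQ (m*(t+1)+r)) * h2P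
      rw [this]
      exact J.add_mem hbig (J.mul_mem_left _ hmJ)
    have hco : IsCoprime (QQ (m-1)) (QQ m) := by
      have := (QQ_coprime (m-1)).symm
      rwa [show m - 1 + 1 = m from by omega] at this
    obtain ⟨s, u, hsu⟩ := hco
    have : QQ (m*t+r) = s * (QQ (m*t+r) * QQ (m-1)) + (u * QQ (m*t+r)) * QQ m := by
      linear_combination QQ (m*t+r) * hsu.symm
    apply ih m r hm J hmJ
    rw [this]
    exact J.add_mem (J.mul_mem_left _ hmem) (J.mul_mem_left _ hmJ)

private lemma QQ_span (a b : ℕ) :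
    QQ (Nat.gcd a b) ∈ Ideal.span {QQ a, QQ b} := by
  induction a, b using Nat.gcd.induction with
  | H0 b =>
    simp only [Nat.gcd_zero_left]
    exact Ideal.subset_span (by simp)
  | H1 a b ha ih =>
    rw [Nat.gcd_rec a b]
    have hsub : Ideal.span {QQ (b % a), QQ a} ≤ Ideal.span {QQ a, QQ b} := by
      rw [Ideal.span_le]
      rintro p (rfl | rfl)
      · apply QQ_helper (b / a) a (b % a) ha
        · exact Ideal.subset_span (by simp)
        · rw [show a * (b/a) + b % a = b from Nat.div_add_mod b a]
          exact Ideal.subset_span (by simp)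
      · exact Ideal.subset_span (by simp)
    exact hsub ih

private lemma z2_add_self : ∀ a : ZMod 2, a + a = 0 := by decide

/-- truncated shift-sum operator in one variable -/
private noncomputable def Mop (n : ℤ) : Module.End (ZMod 2) (ℤ → ZMod 2) where
  toFun f := fun j => if 0 ≤ j ∧ j ≤ n - 1 then f (j-1) + f (j+1) else 0
  map_add' f g := by
    funext j
    by_cases h : 0 ≤ j ∧ j ≤ n - 1 <;> simp only [h, and_self, if_true, if_false, ite_true, ite_false, Pi.add_apply, Pi.smul_apply, smul_eq_mul] <;> ring
  map_smul' c f := by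
    funext j
    by_cases h : 0 ≤ j ∧ j ≤ n - 1 <;> simp only [h, and_self, if_true, if_false, ite_true, ite_false, Pi.add_apply, Pi.smul_apply, smul_eq_mul, RingHom.id_apply] <;> ring

private lemma Mop_apply (n : ℤ) (f : ℤ → ZMod 2) (j : ℤ) :
    Mop n f j = if 0 ≤ j ∧ j ≤ n - 1 then f (j-1) + f (j+1) else 0 := rfl

/-- the reflected-periodic unfolding of f -/
private noncomputable def FF (n : ℤ) (f : ℤ → ZMod 2) : ℤ → ZMod 2 := fun x =>
  f (if x % (2*(n+1)) ≤ n - 1 then x % (2*(n+1)) else 2*n - x % (2*(n+1)))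

section FFlem
variable {n : ℤ} (hn : 0 < n) {f : ℤ → ZMod 2}
  (hf : ∀ j : ℤ, ¬ (0 ≤ j ∧ j ≤ n - 1) → f j = 0)

private lemma FF_congr {x y : ℤ} (h : x % (2*(n+1)) = y % (2*(n+1))) :
    FF n f x = FF n f y := by unfold FF; rw [h]

private lemma FF_modeq {x y : ℤ} (h : x ≡ y [ZMOD 2*(n+1)]) :
    FF n f x = FF n f y := FF_congr h

include hn in
private lemma FF_eq {x : ℤ} (h0 : 0 ≤ x) (h1 : x ≤ n - 1) : FF n f x = f x := by
  unfold FF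
  rw [Int.emod_eq_of_lt h0 (by omega)]
  simp [h1]

include hn in
private lemma FF_reflect (x : ℤ) : FF n f (-2 - x) = FF n f x := by
  have hb : (0:ℤ) < 2*(n+1) := by omega
  set e := x % (2*(n+1)) with he
  have he0 : 0 ≤ e := Int.emod_nonneg x (by omega)
  have he1 : e < 2*(n+1) := Int.emod_lt_of_pos x hb
  have hcong : (-2 - x) % (2*(n+1)) = (-2 - e) % (2*(n+1)) := by
    conv_lhs => rw [show -2 - x = -2 - e + (2*(n+1)) * (-(x / (2*(n+1)))) from by
      rw [he]; rw [Int.emod_def]; ring]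
    rw [Int.add_mul_emod_self_left]
  have he' : (-2 - x) % (2*(n+1)) = 2*n - e ∨ (e = 2*n+1 ∧ (-2 - x) % (2*(n+1)) = 2*n+1) := by
    rcases le_or_gt e (2*n) with h | h
    · left
      rw [hcong, show -2 - e = (2*n - e) + (2*(n+1)) * (-1) from by ring,
        Int.add_mul_emod_self_left, Int.emod_eq_of_lt (by omega) (by omega)]
    · right
      have : e = 2*n+1 := by omega
      refine ⟨this, ?_⟩
      rw [hcong, this, show -2 - (2*n+1) = (2*n+1) + (2*(n+1)) * (-2) from by ring,
        Int.add_mul_emod_self_left, Int.emod_eq_of_lt (by omega) (by omega)]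
  unfold FF
  rw [← he]
  rcases he' with h | ⟨h1, h2⟩
  · rw [h]
    congr 1
    split_ifs <;> omega
  · rw [h1, h2]

include hn in
private lemma FF_period (x : ℤ) : FF n f (x + 2*(n+1)) = FF n f x :=
  FF_congr (by rw [show x + 2*(n+1) = x + (2*(n+1)) * 1 from by ring, Int.add_mul_emod_self_left])

include hn in
private lemma FF_reflect' (x : ℤ) : FF n f (2*n - x) = FF n f x := by
  rw [show 2*n - x = (-2 - x) + 2*(n+1) from by ring, FF_period hn, FF_reflect hn]

include hn hf in
private lemma FF_zero {x : ℤ} (h : (n+1) ∣ (x + 1)) : FF n f x = 0 := by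
  have hb : (0:ℤ) < 2*(n+1) := by omega
  set e := x % (2*(n+1)) with he
  have he0 : 0 ≤ e := Int.emod_nonneg x (by omega)
  have he1 : e < 2*(n+1) := Int.emod_lt_of_pos x hb
  have hd : (n+1) ∣ (e + 1) := by
    obtain ⟨q, hq⟩ := h
    have : x = e + (2*(n+1)) * (x / (2*(n+1))) := by rw [he, Int.emod_def]; ring
    exact ⟨q - 2 * (x / (2*(n+1))), by linear_combination hq - this⟩
  have : e = n ∨ e = 2*n+1 := by
    obtain ⟨q, hq⟩ := hd
    have hq1 : 1 ≤ q := by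
      by_contra hq1
      have h0 : (n+1) * q ≤ (n+1) * 0 := mul_le_mul_of_nonneg_left (by omega) (by omega)
      rw [mul_zero] at h0
      omega
    have hq2 : q ≤ 2 := by
      by_contra hq2
      have h0 : (n+1) * 3 ≤ (n+1) * q := mul_le_mul_of_nonneg_left (by omega) (by omega)
      omega
    interval_cases q <;> omega
  unfold FF
  rw [← he]
  rcases this with h | h <;> rw [h]
  · rw [if_neg (by omega)]
    exact hf _ (by omega)
  · rw [if_neg (by omega)]
    exact hf _ (by omega)

end FFlem

section
variable {n : ℤ} (hn : 0 < n) {f : ℤ → ZMod 2}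
  (hf : ∀ j : ℤ, ¬ (0 ≤ j ∧ j ≤ n - 1) → f j = 0)
private lemma bounded_mul_eq_zero {b x : ℤ} (h : ∃ q : ℤ, x = b*q) (h1 : -b < x) (h2 : x < b) :
    x = 0 := by
  obtain ⟨q, rfl⟩ := h
  rcases lt_trichotomy q 0 with hq | hq | hq
  · have := mul_le_mul_of_nonneg_left (show q ≤ -1 by omega) (show (0:ℤ) ≤ b by nlinarith) 
    rw [mul_neg_one] at this
    omega
  · simp [hq]
  · have := mul_le_mul_of_nonneg_left (show (1:ℤ) ≤ q by omega) (show (0:ℤ) ≤ b by nlinarith)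
    rw [mul_one] at this
    omega

private noncomputable def uu (n : ℤ) (f : ℤ → ZMod 2) (t : ℕ) (j : ℤ) : ZMod 2 :=
  ∑ r ∈ Finset.range t, FF n f (j + 1 - t + 2*r)

include hn hf in
private lemma uu_left (t : ℕ) : uu n f t (-1) = 0 := by
  rcases Nat.eq_zero_or_pos t with ht | ht
  · simp [uu, ht]
  unfold uu
  apply Finset.sum_involution (fun a _ => t - 1 - a)
  · intro a ha
    rw [Finset.mem_range] at ha
    have hcast : ((t - 1 - a : ℕ) : ℤ) = (t:ℤ) - 1 - a := by omega
    have harg : (-1 : ℤ) + 1 - t + 2*((t - 1 - a : ℕ) : ℤ) = -2 - (-1 + 1 - t + 2*a) := by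
      rw [hcast]; ring
    rw [harg, FF_reflect hn]
    exact z2_add_self _
  · intro a ha hne heq
    rw [Finset.mem_range] at ha
    apply hne
    have ht2 : (t:ℤ) = 2*a + 1 := by omega
    apply FF_zero hn hf
    exact ⟨0, by omega⟩
  · intro a ha
    rw [Finset.mem_range] at ha ⊢
    omega
  · intro a ha
    rw [Finset.mem_range] at ha
    omega

include hn hf in
private lemma uu_right (t : ℕ) : uu n f t n = 0 := by
  rcases Nat.eq_zero_or_pos t with ht | ht
  · simp [uu, ht]
  unfold uu
  apply Finset.sum_involution (fun a _ => t - 1 - a)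
  · intro a ha
    rw [Finset.mem_range] at ha
    have hcast : ((t - 1 - a : ℕ) : ℤ) = (t:ℤ) - 1 - a := by omega
    have harg : (n : ℤ) + 1 - t + 2*((t - 1 - a : ℕ) : ℤ) = 2*n - (n + 1 - t + 2*a) := by
      rw [hcast]; ring
    rw [harg, FF_reflect' hn]
    exact z2_add_self _
  · intro a ha hne heq
    rw [Finset.mem_range] at ha
    apply hne
    have ht2 : (t:ℤ) = 2*a + 1 := by omega
    apply FF_zero hn hf
    exact ⟨1, by omega⟩
  · intro a ha
    rw [Finset.mem_range] at ha ⊢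
    omega
  · intro a ha
    rw [Finset.mem_range] at ha
    omega

private lemma uu_rec (t : ℕ) (j : ℤ) :
    uu n f (t+2) j = uu n f (t+1) (j-1) + uu n f (t+1) (j+1) + uu n f t j := by
  set G : ℕ → ZMod 2 := fun r => FF n f (j - 1 - (t:ℤ) + 2*(r:ℤ)) with hG
  have e2 : uu n f (t+2) j = ∑ r ∈ range (t+2), G r :=
    Finset.sum_congr rfl (fun r _ => by rw [hG]; congr 1; push_cast; ring)
  have el : uu n f (t+1) (j-1) = ∑ r ∈ range (t+1), G r :=
    Finset.sum_congr rfl (fun r _ => by rw [hG]; congr 1; push_cast; ring)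
  have er : uu n f (t+1) (j+1) = ∑ r ∈ range (t+1), G (r+1) :=
    Finset.sum_congr rfl (fun r _ => by rw [hG]; congr 1; push_cast; ring)
  have e0 : uu n f t j = ∑ r ∈ range t, G (r+1) :=
    Finset.sum_congr rfl (fun r _ => by rw [hG]; congr 1; push_cast; ring)
  rw [e2, el, er, e0, Finset.sum_range_succ G (t+1),
    Finset.sum_range_succ (fun r => G (r+1)) t]
  have hkey : ∀ a s g : ZMod 2, a + g = a + (s + g) + s := by decide
  exact hkey _ _ _

include hn hf in
private lemma uu_main {j : ℤ} (hj0 : 0 ≤ j) (hj1 : j ≤ n - 1) :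
    uu n f (n.toNat + 1) j = 0 := by
  set N := n.toNat with hNdef
  have hN : (N : ℤ) = n := Int.toNat_of_nonneg (by omega)
  have hj' : (j.toNat : ℤ) = j := Int.toNat_of_nonneg hj0
  have hmod : ∀ a : ℕ, a < N + 1 →
      ∃ q : ℤ, (((3*N + 1 - j.toNat - a) % (N+1) : ℕ) : ℤ) = 3*n + 1 - j - a + (n+1)*q := by
    intro a ha
    have hsub : ((3*N + 1 - j.toNat - a : ℕ) : ℤ) = 3*n + 1 - j - a := by omega
    refine ⟨-((3*n + 1 - j - a) / (n+1)), ?_⟩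
    push_cast
    rw [hsub, show ((N:ℤ)+1) = n+1 from by omega, Int.emod_def]
    ring
  unfold uu
  apply Finset.sum_involution (fun a _ => (3*N + 1 - j.toNat - a) % (N+1))
  · intro a ha
    rw [Finset.mem_range] at ha
    obtain ⟨q, hq⟩ := hmod a ha
    have harg : FF n f (j + 1 - (((N+1):ℕ):ℤ) + 2*(((3*N + 1 - j.toNat - a) % (N+1) : ℕ):ℤ))
        = FF n f (j + 1 - (((N+1):ℕ):ℤ) + 2*(a:ℤ)) := by
      have step1 : FF n f (j + 1 - (((N+1):ℕ):ℤ) + 2*(((3*N + 1 - j.toNat - a) % (N+1) : ℕ):ℤ))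
          = FF n f (-2 - (j + 1 - (((N+1):ℕ):ℤ) + 2*(a:ℤ))) := by
        apply FF_modeq
        rw [Int.modEq_iff_dvd]
        refine ⟨-(q+2), ?_⟩
        push_cast at hq ⊢
        rw [hN] at hq ⊢
        linear_combination (-2 : ℤ) * hq
      rw [step1, FF_reflect hn]
    rw [harg]
    exact z2_add_self _
  · intro a ha hne heq
    rw [Finset.mem_range] at ha
    apply hne
    apply FF_zero hn hf
    obtain ⟨q, hq⟩ := hmod a ha
    rw [heq] at hq
    refine ⟨q + 2, ?_⟩
    push_cast at hq ⊢
    rw [hN]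
    linear_combination hq
  · intro a ha
    rw [Finset.mem_range] at ha ⊢
    exact Nat.mod_lt _ (by omega)
  · intro a ha
    rw [Finset.mem_range] at ha
    obtain ⟨q1, hq1⟩ := hmod a ha
    have hlt : (3*N + 1 - j.toNat - a) % (N+1) < N + 1 := Nat.mod_lt _ (by omega)
    obtain ⟨q2, hq2⟩ := hmod _ hlt
    rw [hq1] at hq2
    have hzero : ((((3*N + 1 - j.toNat - ((3*N + 1 - j.toNat - a) % (N+1))) % (N+1)) : ℕ) : ℤ)
        - a = 0 := by
      apply bounded_mul_eq_zero (b := n+1)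
      · exact ⟨q2 - q1, by linear_combination hq2⟩
      · have : 0 ≤ ((((3*N + 1 - j.toNat - ((3*N + 1 - j.toNat - a) % (N+1))) % (N+1)) : ℕ) : ℤ) :=
          Int.natCast_nonneg _
        omega
      · have : (((3*N + 1 - j.toNat - ((3*N + 1 - j.toNat - a) % (N+1))) % (N+1)) : ℕ) < N + 1 :=
          Nat.mod_lt _ (by omega)
        omega
    omega
end

set_option maxHeartbeats 1000000 in
private lemma z2_cancel : ∀ a b : ZMod 2, a + b = 0 → a = b := by decide

section Agree
open Polynomial Finset
variable {n : ℤ} (hn : 0 < n) {f : ℤ → ZMod 2}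
  (hf : ∀ j : ℤ, ¬ (0 ≤ j ∧ j ≤ n - 1) → f j = 0)

include hn hf in
private lemma ww_eq : ∀ t : ℕ, ∀ j : ℤ,
    (aeval (Mop n) (QQ t)) f j = if 0 ≤ j ∧ j ≤ n - 1 then uu n f t j else 0 := by
  have hrec : ∀ (t : ℕ) (g : ℤ → ZMod 2), (aeval (Mop n) (QQ (t+2))) g
      = Mop n ((aeval (Mop n) (QQ (t+1))) g) + (aeval (Mop n) (QQ t)) g := by
    intro t g
    rw [QQrec, map_add, map_mul, aeval_X]
    simp [LinearMap.add_apply, Module.End.mul_apply]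
  refine two_step ?_ ?_ ?_
  · intro j
    rw [QQ0, map_zero]
    simp [uu]
  · intro j
    rw [QQ1, map_one]
    split_ifs with h
    · have harg : j + 1 - ((1:ℕ):ℤ) + 2*((0:ℕ):ℤ) = j := by push_cast; ring
      show f j = uu n f 1 j
      rw [uu, Finset.sum_range_one, harg, FF_eq hn h.1 h.2]
    · exact hf j h
  · intro t ih1 ih2 j
    rw [hrec t f]
    have hM : (Mop n) ((aeval (Mop n) (QQ (t+1))) f) j
        = if 0 ≤ j ∧ j ≤ n - 1 then uu n f (t+1) (j-1) + uu n f (t+1) (j+1) else 0 := by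
      rw [Mop_apply]
      split_ifs with h
      · have hL : (aeval (Mop n) (QQ (t+1))) f (j-1) = uu n f (t+1) (j-1) := by
          rw [ih2 (j-1)]
          split_ifs with h'
          · rfl
          · have : j - 1 = -1 := by omega
            rw [this]
            exact (uu_left hn hf (t+1)).symm
        have hR : (aeval (Mop n) (QQ (t+1))) f (j+1) = uu n f (t+1) (j+1) := by
          rw [ih2 (j+1)]
          split_ifs with h'
          · rfl
          · have : j + 1 = n := by omega
            rw [this]
            exact (uu_right hn hf (t+1)).symm
        rw [hL, hR]
      · rfl
    rw [Pi.add_apply, hM, ih1 j]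
    split_ifs with h
    · rw [uu_rec]
    · exact add_zero 0

include hn hf in
private lemma cayley : (aeval (Mop n) (QQ (n.toNat + 1))) f = 0 := by
  funext j
  rw [ww_eq hn hf]
  show _ = (0 : ℤ → ZMod 2) j
  split_ifs with h
  · rw [uu_main hn hf h.1 h.2]; rfl
  · rfl

end Agree

section Columns
open Polynomial
variable {m n : ℤ} (hm : 2 ≤ m) (hn : 2 ≤ n) {v : ℤ → ℤ → ZMod 2} (hv : IsHarmonic m n v)

include hv in
private lemma colrec {i : ℤ} (hi0 : 0 ≤ i) (hi1 : i ≤ m - 1) (j : ℤ) :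
    v (i+1) j = (Mop n) (fun j' => v i j') j + v (i-1) j := by
  rw [Mop_apply]
  split_ifs with h
  · have hh := hv.2 i j ⟨hi0, hi1, h.1, h.2⟩
    have key : ∀ a b c d : ZMod 2, a + b + c + d = 0 → b = c + d + a := by decide
    exact key _ _ _ _ hh
  · have h1 : v (i+1) j = 0 := hv.1 _ _ (by unfold InGrid; tauto)
    have h2 : v (i-1) j = 0 := hv.1 _ _ (by unfold InGrid; tauto)
    rw [h1, h2, zero_add]

include hm hn hv in
private lemma col_formula : ∀ t : ℕ, (t:ℤ) ≤ m → ∀ j : ℤ,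
    v t j = (aeval (Mop n) (QQ (t+1))) (fun j' => v 0 j') j := by
  have hrec : ∀ (t : ℕ) (g : ℤ → ZMod 2), (aeval (Mop n) (QQ (t+2))) g
      = Mop n ((aeval (Mop n) (QQ (t+1))) g) + (aeval (Mop n) (QQ t)) g := by
    intro t g
    rw [QQrec, map_add, map_mul, aeval_X]
    simp [LinearMap.add_apply, Module.End.mul_apply]
  refine two_step ?_ ?_ ?_
  · intro _ j
    rw [QQ1, map_one]
    norm_num
  · intro h1m j
    rw [hrec 0]
    rw [QQ1, map_one, QQ0, map_zero, Pi.add_apply]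
    have h0 := colrec hv (le_refl 0) (by omega) j
    norm_num at h0 ⊢
    rw [h0]
    have : v (0 - 1) j = 0 := hv.1 _ _ (by unfold InGrid; omega)
    rw [show (0:ℤ) - 1 = -1 from by ring] at this
    rw [this, add_zero]
  · intro t ih1 ih2 htm j
    have ht1 : ((t+1:ℕ):ℤ) ≤ m := by push_cast at htm ⊢; omega
    have ht0 : ((t:ℕ):ℤ) ≤ m := by push_cast at htm ⊢; omega
    have hstep := colrec hv (i := ((t+1:ℕ):ℤ)) (by positivity) (by push_cast at htm ⊢; omega) j
    have e1 : ((t+2:ℕ):ℤ) = ((t+1:ℕ):ℤ) + 1 := by push_cast; ring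
    have e2 : ((t+1:ℕ):ℤ) - 1 = ((t:ℕ):ℤ) := by push_cast; ring
    rw [e1, hstep, e2, ih1 ht0 j, hrec (t+1)]
    have hcol : (fun j' => v ((t+1:ℕ):ℤ) j') = (aeval (Mop n) (QQ (t+2))) (fun j' => v 0 j') := by
      funext j'
      exact ih2 ht1 j'
    rw [Pi.add_apply, hcol]

include hm hn hv in
private lemma mirror_vertical (k : ℕ) (hk : 0 < k)
    (i j : ℤ) (hi : 0 ≤ i)
    (h1 : InGrid m n ((k:ℤ)*(Int.gcd (m+1) (n+1):ℤ) - 1 - i) j)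
    (h2 : InGrid m n ((k:ℤ)*(Int.gcd (m+1) (n+1):ℤ) - 1 + i) j) :
    v ((k:ℤ)*(Int.gcd (m+1) (n+1):ℤ) - 1 - i) j
      = v ((k:ℤ)*(Int.gcd (m+1) (n+1):ℤ) - 1 + i) j := by
  obtain ⟨hg1, hg2, hg3, hg4⟩ := h1
  obtain ⟨hh1, hh2, hh3, hh4⟩ := h2
  set D := Int.gcd (m+1) (n+1) with hDdef
  set M := m.toNat with hMdef
  set N := n.toNat with hNdef
  have hM : (M:ℤ) = m := Int.toNat_of_nonneg (by omega)
  have hN : (N:ℤ) = n := Int.toNat_of_nonneg (by omega)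
  have hD : D = Nat.gcd (M+1) (N+1) := by
    rw [hDdef]
    unfold Int.gcd
    congr 1 <;> omega
  have hD1 : 1 ≤ D := by
    rw [hD]
    have : 0 < Nat.gcd (M+1) (N+1) := Nat.gcd_pos_of_pos_left _ (by omega)
    omega
  have hkD : ((k*D : ℕ) : ℤ) = (k:ℤ)*(D:ℤ) := by push_cast; ring
  set c0 : ℤ → ZMod 2 := fun j' => v 0 j' with hc0
  have hc0van : ∀ j' : ℤ, ¬ (0 ≤ j' ∧ j' ≤ n - 1) → c0 j' = 0 := by
    intro j' hj'
    exact hv.1 _ _ (by unfold InGrid; omega)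
  have hQm : (aeval (Mop n) (QQ (M+1))) c0 = 0 := by
    funext j'
    have hcf := col_formula hm hn hv M (by omega) j'
    rw [hM] at hcf
    rw [← hcf]
    show v m j' = (0 : ℤ → ZMod 2) j'
    rw [hv.1 _ _ (by unfold InGrid; omega)]
    rfl
  have hQn : (aeval (Mop n) (QQ (N+1))) c0 = 0 := cayley (by omega) hc0van
  have hQd : (aeval (Mop n) (QQ D)) c0 = 0 := by
    have hspan := QQ_span (M+1) (N+1)
    rw [← hD] at hspan
    rw [Ideal.mem_span_pair] at hspan
    obtain ⟨α, β, hab⟩ := hspan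
    rw [← hab, map_add, map_mul, map_mul]
    rw [LinearMap.add_apply, Module.End.mul_apply, Module.End.mul_apply, hQm, hQn,
      map_zero, map_zero, add_zero]
  have hQkd : (aeval (Mop n) (QQ (k*D))) c0 = 0 := by
    obtain ⟨e, he⟩ := QQ_dvd D k
    rw [show k*D = D*k from by ring, he, mul_comm, map_mul, Module.End.mul_apply, hQd, map_zero]
  set iN := i.toNat with hiNdef
  have hiN : (iN:ℤ) = i := Int.toNat_of_nonneg hi
  have hile : iN ≤ k*D - 1 := by omega
  have hkD1 : 1 ≤ k*D := Nat.one_le_iff_ne_zero.mpr (by positivity)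
  set t1 := k*D - 1 - iN with ht1def
  set t2 := k*D - 1 + iN with ht2def
  have ht1 : ((t1:ℕ):ℤ) = (k:ℤ)*(D:ℤ) - 1 - i := by omega
  have ht2 : ((t2:ℕ):ℤ) = (k:ℤ)*(D:ℤ) - 1 + i := by omega
  have ht2m : ((t2:ℕ):ℤ) ≤ m := by omega
  have ht1m : ((t1:ℕ):ℤ) ≤ m := by omega
  have hf1 := col_formula hm hn hv t1 ht1m j
  have hf2 := col_formula hm hn hv t2 ht2m j
  rw [ht1] at hf1
  rw [ht2] at hf2
  rw [hf1, hf2]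
  -- mirror identity
  have hmir := QQ_mirror iN (t1+1)
  rw [show t1+1+2*iN = t2+1 from by omega, show t1+1+iN = k*D from by omega] at hmir
  rw [show X * QQ (k*D) * QQ iN = X * QQ iN * QQ (k*D) from by ring] at hmir
  have := congrArg (fun p => (aeval (Mop n) p) c0 j) hmir
  simp only [map_add, map_mul, LinearMap.add_apply, Module.End.mul_apply, hQkd, map_zero,
    LinearMap.zero_apply] at this
  exact (z2_cancel _ _ this).symm

end Columns
end Helper

/-- Theorem 3(iii): mirror symmetry across the grid lines
x = k(c+1)−1 and y = k(c+1)−1. -/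
theorem mirror_symmetry_grid (m n : ℤ) (hm : 2 ≤ m) (hn : 2 ≤ n)
    (c : ℕ) (hc : c = Int.gcd (m + 1) (n + 1) - 1)
    (v : ℤ → ℤ → ZMod 2) (hv : IsHarmonic m n v) :
    (∀ k : ℕ, 0 < k → (k : ℤ) * ((c : ℤ) + 1) - 1 ≤ m - 1 →
      ∀ i : ℤ, 0 ≤ i → ∀ j : ℤ, 0 ≤ j → j ≤ n - 1 →
        InGrid m n ((k : ℤ) * ((c : ℤ) + 1) - 1 - i) j →
        InGrid m n ((k : ℤ) * ((c : ℤ) + 1) - 1 + i) j →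
        v ((k : ℤ) * ((c : ℤ) + 1) - 1 - i) j =
          v ((k : ℤ) * ((c : ℤ) + 1) - 1 + i) j) ∧
    (∀ k : ℕ, 0 < k → (k : ℤ) * ((c : ℤ) + 1) - 1 ≤ n - 1 →
      ∀ j : ℤ, 0 ≤ j → ∀ i : ℤ, 0 ≤ i → i ≤ m - 1 →
        InGrid m n i ((k : ℤ) * ((c : ℤ) + 1) - 1 - j) →
        InGrid m n i ((k : ℤ) * ((c : ℤ) + 1) - 1 + j) →
        v i ((k : ℤ) * ((c : ℤ) + 1) - 1 - j) =
          v i ((k : ℤ) * ((c : ℤ) + 1) - 1 + j)) := by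
  have hgpos : Int.gcd (m+1) (n+1) ≠ 0 := by
    have h0 : Int.gcd (m+1) (n+1) = Nat.gcd (m+1).natAbs (n+1).natAbs := rfl
    have h1 : 0 < Nat.gcd (m+1).natAbs (n+1).natAbs :=
      Nat.gcd_pos_of_pos_left _ (by omega)
    omega
  have hcg : ((c:ℤ) + 1) = (Int.gcd (m+1) (n+1) : ℤ) := by omega
  constructor
  · intro k hk _ i hi j _ _ h1 h2
    rw [hcg] at h1 h2 ⊢
    exact mirror_vertical hm hn hv k hk i j hi h1 h2
  · intro k hk _ j hj i _ _ h1 h2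
    have hv' : IsHarmonic n m (fun a b => v b a) := by
      constructor
      · intro a b hab
        exact hv.1 b a (by unfold InGrid at hab ⊢; tauto)
      · intro a b hab
        have hh := hv.2 b a (by unfold InGrid at hab ⊢; tauto)
        have key : ∀ x y z w : ZMod 2, x + y + z + w = 0 → z + w + x + y = 0 := by decide
        exact key _ _ _ _ hh
    have hgc : (Int.gcd (n+1) (m+1) : ℤ) = (Int.gcd (m+1) (n+1) : ℤ) := by
      rw [Int.gcd_comm]
    have h1' : InGrid n m ((k:ℤ)*(Int.gcd (n+1) (m+1):ℤ) - 1 - j) i := by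
      rw [hgc, ← hcg]
      unfold InGrid at h1 ⊢
      tauto
    have h2' : InGrid n m ((k:ℤ)*(Int.gcd (n+1) (m+1):ℤ) - 1 + j) i := by
      rw [hgc, ← hcg]
      unfold InGrid at h2 ⊢
      tauto
    have := mirror_vertical hn hm hv' k hk j i hj h1' h2'
    rw [hgc, ← hcg] at this
    exact this
end
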